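/- arXiv:1806.04886 — 5 statements merged into one kernel-verified Lean document; each statement's English description precedes it below -/
import Mathlib

section
/- Let f ∈ C¹([1,T]) attain its maximum over [1,T] at a point t₀ ∈ (1,T]. Then for any 0 < α < 1, the Hadamard-type (Caputo–Hadamard) fractional derivative satisfies D_*^α f(t₀) ≥ (log t₀)^{-α}/Γ(1-α) · (f(t₀) - f(1)) ≥ 0. -/
open Real MeasureTheory Set
open scoped Topology

/-- Caputo–Hadamard fractional derivative of order `α` with base point `1`. -/
noncomputable def caputoHadamard (α : ℝ) (f : ℝ → ℝ) (t : ℝ) : ℝ :=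
  (1 / Real.Gamma (1 - α)) * ∫ s in (1:ℝ)..t, (Real.log (t / s)) ^ (-α) * deriv f s

theorem caputoHadamard_extremum_max
    (T : ℝ) (hT : 1 < T) (f : ℝ → ℝ)
    (hf : ContDiffOn ℝ 1 f (Set.Icc 1 T))
    (t₀ : ℝ) (ht₀ : t₀ ∈ Set.Ioc (1:ℝ) T)
    (hmax : ∀ t ∈ Set.Icc (1:ℝ) T, f t ≤ f t₀)
    (α : ℝ) (hα0 : 0 < α) (hα1 : α < 1) :
    (Real.log t₀) ^ (-α) / Real.Gamma (1 - α) * (f t₀ - f 1) ≤ caputoHadamard α f t₀ ∧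
      0 ≤ (Real.log t₀) ^ (-α) / Real.Gamma (1 - α) * (f t₀ - f 1) := by
  obtain ⟨ht1, htT⟩ := ht₀
  have ht0pos : (0:ℝ) < t₀ := by linarith
  have hL : 0 < Real.log t₀ := Real.log_pos ht1
  have hΓ : 0 < Real.Gamma (1 - α) := Real.Gamma_pos_of_pos (by linarith)
  set g1 : ℝ := (Real.log t₀) ^ (-α) with hg1def
  have hg1pos : 0 < g1 := Real.rpow_pos_of_pos hL _
  have hf1le : f 1 ≤ f t₀ := hmax 1 ⟨le_refl _, hT.le⟩
  set g : ℝ → ℝ := fun s => (Real.log (t₀ / s)) ^ (-α) with hgdef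
  set h : ℝ → ℝ := fun s => g s - g1 with hhdef
  set φ : ℝ → ℝ := derivWithin f (Set.Icc 1 T) with hφdef
  have hφc : ContinuousOn φ (Set.Icc 1 T) :=
    hf.continuousOn_derivWithin (uniqueDiffOn_Icc hT) le_rfl
  obtain ⟨M, hMb⟩ := isCompact_Icc.exists_bound_of_continuousOn hφc
  have hM0 : 0 ≤ M := le_trans (norm_nonneg _) (hMb 1 ⟨le_rfl, hT.le⟩)
  have hd : ∀ x ∈ Set.Ioo (1:ℝ) T, HasDerivAt f (deriv f x) x := by
    intro x hx
    exact (((hf.differentiableOn one_ne_zero) x (Ioo_subset_Icc_self hx)).differentiableAt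
      (Icc_mem_nhds hx.1 hx.2)).hasDerivAt
  have hdφ : ∀ x ∈ Set.Ioo (1:ℝ) T, deriv f x = φ x := by
    intro x hx
    exact (derivWithin_of_mem_nhds (Icc_mem_nhds hx.1 hx.2)).symm
  have hIooT : Set.Ioo (1:ℝ) t₀ ⊆ Set.Ioo (1:ℝ) T := Set.Ioo_subset_Ioo le_rfl htT
  have hdbound : ∀ x ∈ Set.Ioo (1:ℝ) t₀, |deriv f x| ≤ M := by
    intro x hx
    rw [hdφ x (hIooT hx)]
    simpa [Real.norm_eq_abs] using hMb x (Ioo_subset_Icc_self (hIooT hx))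
  -- interval integrability of `deriv f` on `[1, t₀]`
  have hd_int : IntervalIntegrable (deriv f) volume 1 t₀ := by
    rw [intervalIntegrable_iff_integrableOn_Ioo_of_le ht1.le]
    refine Integrable.mono' (integrable_const M)
      ((measurable_deriv f).aestronglyMeasurable) ?_
    exact (ae_restrict_iff' measurableSet_Ioo).2 (Filter.Eventually.of_forall
      (fun x hx => by simpa [Real.norm_eq_abs] using hdbound x hx))
  -- the singular weight is integrable
  have hdecay : IntervalIntegrable (fun s : ℝ => (t₀ - s) ^ (-α)) volume 1 t₀ := by
    have h1 : IntervalIntegrable (fun x : ℝ => x ^ (-α)) volume (t₀ - 1) 0 :=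
      intervalIntegral.intervalIntegrable_rpow' (by linarith)
    have h2 := h1.comp_sub_left t₀
    simpa using h2
  have hlogpos : ∀ x : ℝ, 0 < x → x < t₀ → 0 < Real.log (t₀ / x) := by
    intro x hx0 hxt
    exact Real.log_pos ((one_lt_div hx0).2 hxt)
  -- pointwise bound for `g`
  have hgb : ∀ x ∈ Set.Ioo (1:ℝ) t₀, g x ≤ t₀ ^ α * (t₀ - x) ^ (-α) := by
    intro x hx
    have hx0 : (0:ℝ) < x := lt_trans zero_lt_one hx.1
    have htx : (0:ℝ) < t₀ - x := by linarith [hx.2]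
    have hq : (t₀ - x) / t₀ ≤ Real.log (t₀ / x) := by
      have h0 := Real.one_sub_inv_le_log_of_pos (div_pos ht0pos hx0)
      rw [inv_div] at h0
      have : (t₀ - x) / t₀ = 1 - x / t₀ := by field_simp
      linarith [h0, this.le]
    have hbase : (0:ℝ) < (t₀ - x) / t₀ := div_pos htx ht0pos
    calc g x ≤ ((t₀ - x) / t₀) ^ (-α) :=
          Real.rpow_le_rpow_of_nonpos hbase hq (by linarith)
      _ = t₀ ^ α * (t₀ - x) ^ (-α) := by
          rw [Real.div_rpow htx.le ht0pos.le, Real.rpow_neg ht0pos.le,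
            div_eq_mul_inv, inv_inv]
          ring
  have hgc : ∀ x : ℝ, 0 < x → x < t₀ → ContinuousAt g x := by
    intro x hx0 hxt
    have hlx : Real.log (t₀ / x) ≠ 0 := (hlogpos x hx0 hxt).ne'
    have hc : ContinuousAt (fun s : ℝ => Real.log (t₀ / s)) x :=
      (Real.continuousAt_log (div_pos ht0pos hx0).ne').comp
        (continuousAt_const.div continuousAt_id hx0.ne')
    exact hc.rpow_const (Or.inl hlx)
  -- integrability of `g * deriv f`
  have hgd_int : IntervalIntegrable (fun s => g s * deriv f s) volume 1 t₀ := by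
    rw [intervalIntegrable_iff_integrableOn_Ioo_of_le ht1.le]
    have hmeas : AEStronglyMeasurable (fun s => g s * deriv f s)
        (volume.restrict (Set.Ioo (1:ℝ) t₀)) := by
      refine AEStronglyMeasurable.mul ?_ (measurable_deriv f).aestronglyMeasurable
      exact ContinuousOn.aestronglyMeasurable
        (fun x hx => (hgc x (lt_trans zero_lt_one hx.1) hx.2).continuousWithinAt)
        measurableSet_Ioo
    refine Integrable.mono' (g := fun s => M * (t₀ ^ α * (t₀ - s) ^ (-α))) ?_ hmeas ?_
    · have h2 := (hdecay.const_mul (t₀ ^ α)).const_mul M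
      rw [intervalIntegrable_iff_integrableOn_Ioo_of_le ht1.le] at h2
      have h3 : IntegrableOn (fun s => M * (t₀ ^ α * (t₀ - s) ^ (-α))) (Set.Ioo 1 t₀) volume := by
        simpa [mul_assoc] using h2
      exact h3
    · refine (ae_restrict_iff' measurableSet_Ioo).2 (Filter.Eventually.of_forall
        (fun x hx => ?_))
      have hx0 : (0:ℝ) < x := lt_trans zero_lt_one hx.1
      have hgnn : 0 ≤ g x := Real.rpow_nonneg (hlogpos x hx0 hx.2).le _
      rw [Real.norm_eq_abs, abs_mul, abs_of_nonneg hgnn]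
      calc g x * |deriv f x| ≤ (t₀ ^ α * (t₀ - x) ^ (-α)) * M :=
            mul_le_mul (hgb x hx) (hdbound x hx) (abs_nonneg _)
              (mul_nonneg (Real.rpow_nonneg ht0pos.le _)
                (Real.rpow_nonneg (by linarith [hx.2]) _))
        _ = M * (t₀ ^ α * (t₀ - x) ^ (-α)) := by ring
  have hhd_int : IntervalIntegrable (fun s => h s * deriv f s) volume 1 t₀ := by
    have heq : (fun s => h s * deriv f s)
        = fun s => g s * deriv f s - g1 * deriv f s := by
      funext s; simp only [hhdef]; ring
    rw [heq]
    exact hgd_int.sub (hd_int.const_mul g1)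
  -- fundamental theorem of calculus for `f`
  have hFTC : ∫ s in (1:ℝ)..t₀, deriv f s = f t₀ - f 1 := by
    refine intervalIntegral.integral_eq_sub_of_hasDeriv_right_of_le ht1.le
      (hf.continuousOn.mono (Set.Icc_subset_Icc le_rfl htT)) ?_ hd_int
    intro x hx
    exact (hd x (hIooT hx)).hasDerivWithinAt
  -- splitting of the integral
  have hsplit : ∫ s in (1:ℝ)..t₀, g s * deriv f s
      = (∫ s in (1:ℝ)..t₀, h s * deriv f s) + g1 * (f t₀ - f 1) := by
    have e1 : ∫ s in (1:ℝ)..t₀, h s * deriv f s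
        = (∫ s in (1:ℝ)..t₀, g s * deriv f s) - ∫ s in (1:ℝ)..t₀, g1 * deriv f s := by
      rw [← intervalIntegral.integral_sub hgd_int (hd_int.const_mul g1)]
      congr 1; funext s; simp only [hhdef]; ring
    rw [e1, intervalIntegral.integral_const_mul, hFTC]; ring
  -- derivative of g
  have hgderiv : ∀ x : ℝ, 0 < x → x < t₀ →
      HasDerivAt g (α / x * Real.log (t₀ / x) ^ (-α - 1)) x := by
    intro x hx0 hxt
    have hdiv : HasDerivAt (fun s : ℝ => t₀ / s) (-(t₀ / x ^ 2)) x := by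
      have h0 := (hasDerivAt_const x t₀).div (hasDerivAt_id x) hx0.ne'
      exact h0.congr_deriv (by simp only [id]; ring)
    have hlog : HasDerivAt (fun s : ℝ => Real.log (t₀ / s)) (-x⁻¹) x := by
      have htx : t₀ / x ≠ 0 := (div_pos ht0pos hx0).ne'
      have h0 := (Real.hasDerivAt_log htx).comp x hdiv
      refine h0.congr_deriv ?_
      have hx' := hx0.ne'
      have ht' := ht0pos.ne'
      field_simp
    have hlx : Real.log (t₀ / x) ≠ 0 := (hlogpos x hx0 hxt).ne'
    have h0 := hlog.rpow_const (p := -α) (Or.inl hlx)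
    convert h0 using 1
    ring
  have hh1 : h 1 = 0 := by simp [hhdef, hgdef, hg1def]
  -- key inequality on subintervals [1, b]
  have key_b : ∀ b ∈ Set.Ioo (1:ℝ) t₀,
      h b * (f b - f t₀) ≤ ∫ s in (1:ℝ)..b, h s * deriv f s := by
    intro b hb
    have hb1 : (1:ℝ) < b := hb.1
    have hbt : b < t₀ := hb.2
    have huIcc : Set.uIcc (1:ℝ) b = Set.Icc 1 b := Set.uIcc_of_le hb1.le
    have hIccT : Set.Icc (1:ℝ) b ⊆ Set.Icc 1 T :=
      Set.Icc_subset_Icc le_rfl (by linarith)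
    -- continuity of h on [1, b]
    have hhc : ContinuousOn h (Set.uIcc (1:ℝ) b) := by
      rw [huIcc]
      intro x hx
      exact ((hgc x (by linarith [hx.1]) (by linarith [hx.2])).sub
        continuousAt_const).continuousWithinAt
    have hFc : ContinuousOn (fun s => f s - f t₀) (Set.uIcc (1:ℝ) b) := by
      rw [huIcc]
      exact (hf.continuousOn.mono hIccT).sub continuousOn_const
    -- h' is continuous on [1, b]
    have hh'c : ContinuousOn (fun s => α / s * Real.log (t₀ / s) ^ (-α - 1))
        (Set.uIcc (1:ℝ) b) := by
      rw [huIcc]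
      intro x hx
      have hx0 : (0:ℝ) < x := by linarith [hx.1]
      have hxt : x < t₀ := by linarith [hx.2]
      have hlx : Real.log (t₀ / x) ≠ 0 := (hlogpos x hx0 hxt).ne'
      have hc1 : ContinuousAt (fun s : ℝ => Real.log (t₀ / s)) x :=
        (Real.continuousAt_log (div_pos ht0pos hx0).ne').comp
          (continuousAt_const.div continuousAt_id hx0.ne')
      exact ((continuousAt_const.div continuousAt_id hx0.ne').mul
        (hc1.rpow_const (Or.inl hlx))).continuousWithinAt
    have hsub2 : Set.uIcc (1:ℝ) b ⊆ Set.uIcc (1:ℝ) t₀ := by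
      rw [huIcc, Set.uIcc_of_le ht1.le]
      exact Set.Icc_subset_Icc le_rfl hbt.le
    have hd_int_b : IntervalIntegrable (deriv f) volume 1 b := hd_int.mono_set hsub2
    have hIBP := intervalIntegral.integral_mul_deriv_eq_deriv_mul_of_hasDeriv_right
      (a := 1) (b := b)
      (u := h) (v := fun s => f s - f t₀)
      (u' := fun s => α / s * Real.log (t₀ / s) ^ (-α - 1)) (v' := deriv f)
      hhc hFc
      (by
        intro x hx
        rw [min_eq_left hb1.le, max_eq_right hb1.le] at hx
        exact (((hgderiv x (by linarith [hx.1]) (by linarith [hx.2])).sub_const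
          g1).hasDerivWithinAt))
      (by
        intro x hx
        rw [min_eq_left hb1.le, max_eq_right hb1.le] at hx
        exact (((hd x ⟨hx.1, by linarith [hx.2]⟩).sub_const (f t₀)).hasDerivWithinAt))
      (hh'c.intervalIntegrable) hd_int_b
    -- the boundary term at 1 vanishes and the remaining integral is nonpositive
    have hnonpos : ∫ x in (1:ℝ)..b, (α / x * Real.log (t₀ / x) ^ (-α - 1)) * (f x - f t₀) ≤ 0 := by
      have hnn : 0 ≤ ∫ x in (1:ℝ)..b,
          -((α / x * Real.log (t₀ / x) ^ (-α - 1)) * (f x - f t₀)) := by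
        refine intervalIntegral.integral_nonneg hb1.le ?_
        intro u hu
        have hu0 : (0:ℝ) < u := by linarith [hu.1]
        have hF : f u - f t₀ ≤ 0 := sub_nonpos.2 (hmax u (hIccT hu))
        have hh' : 0 ≤ α / u * Real.log (t₀ / u) ^ (-α - 1) :=
          mul_nonneg (div_nonneg hα0.le hu0.le)
            (Real.rpow_nonneg (hlogpos u hu0 (by linarith [hu.2])).le _)
        nlinarith
      rw [intervalIntegral.integral_neg] at hnn
      linarith
    rw [hIBP, hh1]
    nlinarith
  -- pass to the limit b → t₀⁻
  have key : 0 ≤ ∫ s in (1:ℝ)..t₀, h s * deriv f s := by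
    haveI hne : (nhdsWithin t₀ (Set.Ioo (1:ℝ) t₀)).NeBot := by
      refine mem_closure_iff_nhdsWithin_neBot.1 ?_
      rw [closure_Ioo (ne_of_lt ht1)]
      exact ⟨ht1.le, le_refl _⟩
    set l := nhdsWithin t₀ (Set.Ioo (1:ℝ) t₀) with hldef
    -- the primitive is continuous
    have hPc : ContinuousOn (fun b => ∫ s in (1:ℝ)..b, h s * deriv f s)
        (Set.uIcc (1:ℝ) t₀) :=
      intervalIntegral.continuousOn_primitive_interval' hhd_int Set.left_mem_uIcc
    have hP : Filter.Tendsto (fun b => ∫ s in (1:ℝ)..b, h s * deriv f s) l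
        (𝓝 (∫ s in (1:ℝ)..t₀, h s * deriv f s)) := by
      have hsub : Set.Ioo (1:ℝ) t₀ ⊆ Set.uIcc (1:ℝ) t₀ := by
        rw [Set.uIcc_of_le ht1.le]
        exact Set.Ioo_subset_Icc_self
      exact (hPc t₀ Set.right_mem_uIcc).mono hsub
    -- the boundary term tends to 0
    have hQ : Filter.Tendsto (fun b => h b * (f b - f t₀)) l (𝓝 0) := by
      have hbound : ∀ᶠ b in l, ‖h b * (f b - f t₀)‖ ≤ t₀ ^ α * M * (t₀ - b) ^ (1 - α) := by
        filter_upwards [self_mem_nhdsWithin] with b hb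
        have hb0 : (0:ℝ) < b := lt_trans zero_lt_one hb.1
        have htb : (0:ℝ) < t₀ - b := by linarith [hb.2]
        have hg1le : g1 ≤ g b := by
          have hle : Real.log (t₀ / b) ≤ Real.log t₀ :=
            Real.log_le_log (div_pos ht0pos hb0) (div_le_self ht0pos.le hb.1.le)
          exact Real.rpow_le_rpow_of_nonpos (hlogpos b hb0 hb.2) hle (by linarith)
        have hhb0 : 0 ≤ h b := by simp only [hhdef]; linarith
        have hhb : h b ≤ t₀ ^ α * (t₀ - b) ^ (-α) := by
          have := hgb b hb
          simp only [hhdef]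
          linarith [hg1pos]
        have hFb : |f b - f t₀| ≤ M * (t₀ - b) := by
          have := (convex_Icc (1:ℝ) T).norm_image_sub_le_of_norm_derivWithin_le
            (hf.differentiableOn one_ne_zero) hMb
            (⟨ht1.le, htT⟩ : t₀ ∈ Set.Icc (1:ℝ) T)
            (⟨hb.1.le, by linarith [hb.2]⟩ : b ∈ Set.Icc (1:ℝ) T)
          rw [Real.norm_eq_abs, Real.norm_eq_abs, abs_of_nonpos (by linarith [hb.2] : b - t₀ ≤ 0)] at this
          simpa using this
        have hprod : |h b * (f b - f t₀)| ≤ (t₀ ^ α * (t₀ - b) ^ (-α)) * (M * (t₀ - b)) := by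
          rw [abs_mul, abs_of_nonneg hhb0]
          exact mul_le_mul hhb hFb (abs_nonneg _)
            (mul_nonneg (Real.rpow_nonneg ht0pos.le _) (Real.rpow_nonneg htb.le _))
        have hrw : (t₀ ^ α * (t₀ - b) ^ (-α)) * (M * (t₀ - b))
            = t₀ ^ α * M * (t₀ - b) ^ (1 - α) := by
          have : (t₀ - b) ^ (-α) * (t₀ - b) = (t₀ - b) ^ (1 - α) := by
            have h2 := Real.rpow_add htb (-α) 1
            rw [Real.rpow_one] at h2
            rw [show (1:ℝ) - α = -α + 1 by ring]
            linarith
          calc (t₀ ^ α * (t₀ - b) ^ (-α)) * (M * (t₀ - b))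
              = t₀ ^ α * M * ((t₀ - b) ^ (-α) * (t₀ - b)) := by ring
            _ = t₀ ^ α * M * (t₀ - b) ^ (1 - α) := by rw [this]
        rw [Real.norm_eq_abs]
        calc |h b * (f b - f t₀)| ≤ (t₀ ^ α * (t₀ - b) ^ (-α)) * (M * (t₀ - b)) := hprod
          _ = t₀ ^ α * M * (t₀ - b) ^ (1 - α) := hrw
      have t1 : Filter.Tendsto (fun b : ℝ => t₀ - b) l (𝓝 0) := by
        have h0 : Filter.Tendsto (fun b : ℝ => t₀ - b) (𝓝 t₀) (𝓝 (t₀ - t₀)) :=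
          (continuous_const.sub continuous_id).tendsto t₀
        simpa using h0.mono_left nhdsWithin_le_nhds
      have t2 : Filter.Tendsto (fun b => (t₀ - b) ^ (1 - α)) l (𝓝 0) := by
        have hc : ContinuousAt (fun x : ℝ => x ^ (1 - α)) 0 :=
          Real.continuousAt_rpow_const 0 (1 - α) (Or.inr (by linarith))
        have h0 := hc.tendsto.comp t1
        simpa [Function.comp_def, Real.zero_rpow (by linarith : (1:ℝ) - α ≠ 0)] using h0
      have t3 : Filter.Tendsto (fun b => t₀ ^ α * M * (t₀ - b) ^ (1 - α)) l (𝓝 0) := by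
        simpa using t2.const_mul (t₀ ^ α * M)
      exact squeeze_zero_norm' hbound t3
    have hev : ∀ᶠ b in l, h b * (f b - f t₀) ≤ ∫ s in (1:ℝ)..b, h s * deriv f s := by
      filter_upwards [self_mem_nhdsWithin] with b hb
      exact key_b b hb
    have := le_of_tendsto_of_tendsto hQ hP hev
    simpa using this
  -- conclude
  have hkey2 : g1 * (f t₀ - f 1) ≤ ∫ s in (1:ℝ)..t₀, g s * deriv f s := by
    rw [hsplit]; linarith
  constructor
  · calc g1 / Real.Gamma (1 - α) * (f t₀ - f 1)
        = (1 / Real.Gamma (1 - α)) * (g1 * (f t₀ - f 1)) := by ring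
      _ ≤ (1 / Real.Gamma (1 - α)) * ∫ s in (1:ℝ)..t₀, g s * deriv f s :=
          mul_le_mul_of_nonneg_left hkey2 (by positivity)
      _ = caputoHadamard α f t₀ := rfl
  · exact mul_nonneg (div_nonneg hg1pos.le hΓ.le) (by linarith)
end

section
/- Let Ω = G × (1,T] with G ⊂ ℝⁿ a bounded domain with smooth boundary, ν > 0, and 0 < α < 1. Suppose u, sufficiently smooth on the closure of Ω, satisfies D_{*,t}^α u(x,t) = ν Δₓ u(x,t) + F(x,t) in Ω, u(x,1) = φ(x) on Ḡ, u(x,t) = ψ(x,t) on ∂G × [1,T]. If F(x,t) ≥ 0 on the closure of Ω, then u(x,t) ≥ min{min_{∂G×[1,T]} ψ, min_Ḡ φ} on the closure of Ω. -/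
open Real MeasureTheory Set
open Filter intervalIntegral

/-- Caputo–Hadamard fractional derivative in the time variable, base point `1`. -/
noncomputable def caputoHadamardT {n : ℕ} (α : ℝ) (u : (Fin n → ℝ) → ℝ → ℝ)
    (x : Fin n → ℝ) (t : ℝ) : ℝ :=
  (1 / Real.Gamma (1 - α)) * ∫ s in (1:ℝ)..t, (Real.log (t / s)) ^ (-α) * deriv (u x) s

/-- Laplacian in the space variable. -/
noncomputable def laplacianX {n : ℕ} (u : (Fin n → ℝ) → ℝ → ℝ) (x : Fin n → ℝ) (t : ℝ) : ℝ :=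
  ∑ j : Fin n, iteratedDeriv 2 (fun z => u (Function.update x j z) t) (x j)

lemma junk_second_deriv_nonneg_at_min (f : ℝ → ℝ) (p ε : ℝ) (hε : 0 < ε)
    (hc : ContinuousOn f (Icc (p - ε) (p + ε)))
    (hmin : ∀ z ∈ Icc (p - ε) (p + ε), f p ≤ f z) :
    0 ≤ deriv (deriv f) p := by
  by_contra hlt
  push_neg at hlt
  have hd : DifferentiableAt ℝ (deriv f) p := by
    by_contra hd
    rw [deriv_zero_of_not_differentiableAt hd] at hlt
    exact lt_irrefl _ hlt
  have hnhds : Icc (p - ε) (p + ε) ∈ nhds p := Icc_mem_nhds (by linarith) (by linarith)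
  have hg0 : deriv f p = 0 := by
    by_cases hdf : DifferentiableAt ℝ f p
    · exact IsLocalMin.deriv_eq_zero (Filter.eventually_of_mem hnhds hmin)
    · exact deriv_zero_of_not_differentiableAt hdf
  set c := deriv (deriv f) p with hc'
  have hslope : Tendsto (slope (deriv f) p) (nhdsWithin p {p}ᶜ) (nhds c) :=
    hasDerivAt_iff_tendsto_slope.1 hd.hasDerivAt
  have hslope' : ∀ᶠ x in nhdsWithin p (Ioi p), slope (deriv f) p x < c / 2 :=
    (hslope.mono_left (nhdsWithin_mono p fun x hx => ne_of_gt hx)).eventually_lt_const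
      (by linarith)
  have hsmall : ∀ᶠ x in nhdsWithin p (Ioi p), x < p + ε :=
    eventually_nhdsWithin_of_eventually_nhds (Filter.Tendsto.eventually_lt_const (by linarith)
      Filter.tendsto_id)
  obtain ⟨b, hb, hIoo⟩ := mem_nhdsGT_iff_exists_Ioo_subset.1 (hslope'.and hsmall)
  -- on Ioo p b : deriv f x < 0 and x < p + ε
  have hneg : ∀ x ∈ Ioo p b, deriv f x < 0 := by
    intro x hx
    obtain ⟨h1, _⟩ := hIoo hx
    have hxp : 0 < x - p := by linarith [hx.1]
    rw [slope_def_field, hg0] at h1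
    have : (deriv f x - 0) / (x - p) < c / 2 := h1
    have := (div_lt_iff₀ hxp).1 (by simpa using this)
    nlinarith
  set q := (p + min b (p + ε)) / 2 with hq
  have hpb : p < min b (p + ε) := lt_min hb (by linarith)
  have hpq : p < q := by simp only [hq]; linarith
  have hqb : q < min b (p + ε) := by simp only [hq]; linarith
  have hqε : q ≤ p + ε := le_of_lt (lt_of_lt_of_le hqb (min_le_right _ _))
  have hsub : Icc p q ⊆ Icc (p - ε) (p + ε) := fun x hx => ⟨by linarith [hx.1], le_trans hx.2 hqε⟩
  have hanti : StrictAntiOn f (Icc p q) := by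
    apply strictAntiOn_of_deriv_neg (convex_Icc p q) (hc.mono hsub)
    intro x hx
    rw [interior_Icc] at hx
    exact hneg x ⟨hx.1, lt_of_lt_of_le (lt_of_lt_of_le hx.2 (le_of_lt hqb)) (min_le_left _ _)⟩
  have : f q < f p := hanti ⟨le_rfl, hpq.le⟩ ⟨hpq.le, le_rfl⟩ hpq
  exact absurd (hmin q ⟨by linarith, hqε⟩) (not_le.2 this)

lemma hadamard_min_estimate (v : ℝ → ℝ) (T t0 α : ℝ) (hα0 : 0 < α) (hα1 : α < 1)
    (ht0 : 1 < t0) (ht0T : t0 ≤ T)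
    (hv : ContDiffOn ℝ 1 v (Set.Icc 1 T))
    (hmin : ∀ s ∈ Set.Icc 1 t0, v t0 ≤ v s) :
    ∫ s in (1:ℝ)..t0, (Real.log (t0/s))^(-α) * deriv v s
      ≤ (Real.log t0)^(-α) * (v t0 - v 1) := by
  have hT1 : (1:ℝ) < T := lt_of_lt_of_le ht0 ht0T
  set k : ℝ → ℝ := fun s => (Real.log (t0/s))^(-α) with hk
  set w : ℝ → ℝ := derivWithin v (Set.Icc 1 T) with hwdef
  have hw : ContinuousOn w (Set.Icc 1 T) :=
    hv.continuousOn_derivWithin (uniqueDiffOn_Icc hT1) le_rfl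
  have hvd : ∀ s ∈ Ioo (1:ℝ) T, HasDerivAt v (deriv v s) s ∧ deriv v s = w s := by
    intro s hs
    have h1 : Set.Icc (1:ℝ) T ∈ nhds s := Icc_mem_nhds hs.1 hs.2
    have h2 : DifferentiableAt ℝ v s :=
      ((hv.differentiableOn one_ne_zero) s (Ioo_subset_Icc_self hs)).differentiableAt h1
    exact ⟨h2.hasDerivAt, (derivWithin_of_mem_nhds h1).symm⟩
  obtain ⟨M, hM⟩ := isCompact_Icc.exists_bound_of_continuousOn hw
  have hM0 : 0 ≤ M := le_trans (norm_nonneg _) (hM 1 ⟨le_rfl, hT1.le⟩)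
  have hdb : ∀ s ∈ Ioo (1:ℝ) T, |deriv v s| ≤ M := by
    intro s hs
    rw [(hvd s hs).2]
    exact hM s (Ioo_subset_Icc_self hs)
  have hlip : ∀ a ∈ Set.Icc (1:ℝ) T, ∀ b ∈ Set.Icc (1:ℝ) T, |v b - v a| ≤ M * |b - a| := by
    intro a ha b hb
    exact Convex.norm_image_sub_le_of_norm_derivWithin_le (hv.differentiableOn one_ne_zero)
      hM (convex_Icc 1 T) ha hb
  -- log lower bound
  have hlog : ∀ s : ℝ, 0 < s → s ≤ t0 → (t0 - s)/t0 ≤ Real.log (t0/s) := by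
    intro s hs hst
    have h1 : Real.log (s/t0) ≤ s/t0 - 1 := Real.log_le_sub_one_of_pos (by positivity)
    have h2 : Real.log (t0/s) = - Real.log (s/t0) := by
      rw [← Real.log_inv]; congr 1; field_simp
    rw [h2]
    have : (t0 - s)/t0 = 1 - s/t0 := by field_simp
    linarith
  have hkub : ∀ s : ℝ, 1 ≤ s → s < t0 → k s ≤ t0^α * (t0 - s)^(-α) := by
    intro s h1s hst
    have hts : (0:ℝ) < t0 - s := by linarith
    have h0 : (0:ℝ) < (t0 - s)/t0 := by positivity
    have h2 : ((t0 - s)/t0) ^ (-α) = t0^α * (t0-s)^(-α) := by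
      rw [Real.div_rpow (by linarith) (by positivity), Real.rpow_neg (by positivity) α,
        Real.rpow_neg (by positivity : (0:ℝ) ≤ t0) α]
      have h1 : (0:ℝ) < t0 ^ α := Real.rpow_pos_of_pos (by linarith) α
      have h2 : (0:ℝ) < (t0 - s) ^ α := Real.rpow_pos_of_pos hts α
      field_simp
    calc k s ≤ ((t0 - s)/t0) ^ (-α) :=
            Real.rpow_le_rpow_of_nonpos h0 (hlog s (by linarith) hst.le) (by linarith)
      _ = t0^α * (t0-s)^(-α) := h2
  have ht0pos : (0:ℝ) < t0 := by linarith
  have hknn : ∀ s : ℝ, 1 ≤ s → s ≤ t0 → 0 ≤ k s := by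
    intro s h1 h2
    exact Real.rpow_nonneg (Real.log_nonneg ((one_le_div (by linarith)).2 h2)) _
  -- integrability of the dominating function
  have hrpow_int : IntervalIntegrable (fun s : ℝ => (t0 - s)^(-α)) volume 1 t0 := by
    have h := intervalIntegral.intervalIntegrable_rpow' (a := 0) (b := t0 - 1) (r := -α)
      (by linarith)
    have h2 := h.comp_sub_left t0
    simpa using h2.symm
  have hmeas : AEStronglyMeasurable (fun s => k s * deriv v s)
      (volume.restrict (Set.uIoc (1:ℝ) t0)) := by
    have h1 : Measurable fun s : ℝ => t0 / s := measurable_const.div measurable_id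
    have h2 : Measurable fun s : ℝ => k s * deriv v s := by
      apply Measurable.mul ?_ (measurable_deriv v)
      measurability
    exact h2.aestronglyMeasurable.restrict
  have hgint : IntervalIntegrable (fun s : ℝ => (t0 - s)^(-α) * (t0^α * M)) volume 1 t0 :=
    hrpow_int.mul_const _
  have hint : IntervalIntegrable (fun s => k s * deriv v s) volume 1 t0 := by
    apply hgint.mono_fun' hmeas
    rw [Set.uIoc_of_le ht0.le]
    filter_upwards [ae_restrict_mem measurableSet_Ioc] with s hs
    rcases eq_or_lt_of_le hs.2 with heq | hlt2
    · rw [heq]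
      have hk0 : k t0 = 0 := by
        simp [hk, div_self (ne_of_gt ht0pos), Real.log_one,
          Real.zero_rpow (by linarith : -α ≠ 0)]
      rw [hk0]
      simp [Real.zero_rpow (by linarith : -α ≠ 0)]
    · have hs1 : 1 ≤ s := hs.1.le
      have hdvb : |deriv v s| ≤ M := hdb s ⟨hs.1, lt_of_lt_of_le hlt2 ht0T⟩
      have hknn' : 0 ≤ k s := hknn s hs1 hs.2
      have hkub' : k s ≤ t0^α * (t0 - s)^(-α) := hkub s hs1 hlt2
      have hrnn : (0:ℝ) ≤ (t0 - s)^(-α) := Real.rpow_nonneg (by linarith) _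
      calc ‖k s * deriv v s‖ = k s * |deriv v s| := by
            rw [norm_mul, Real.norm_eq_abs, Real.norm_eq_abs, abs_of_nonneg hknn']
        _ ≤ (t0^α * (t0 - s)^(-α)) * M := by
            apply mul_le_mul hkub' hdvb (abs_nonneg _)
            positivity
        _ = (t0 - s)^(-α) * (t0^α * M) := by ring
  -- pointwise inequality for τ ∈ Ioo 1 t0
  set k' : ℝ → ℝ := fun x => -x⁻¹ * (-α) * (Real.log (t0/x))^(-α - 1) with hk'
  have hlogd : ∀ x : ℝ, 0 < x → HasDerivAt (fun s => Real.log (t0/s)) (-x⁻¹) x := by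
    intro x hx
    have h1 : HasDerivAt (fun s : ℝ => Real.log t0 - Real.log s) (-x⁻¹) x := by
      simpa using (Real.hasDerivAt_log (ne_of_gt hx)).const_sub (Real.log t0)
    apply h1.congr_of_eventuallyEq
    filter_upwards [eventually_gt_nhds hx] with s hs
    rw [Real.log_div (ne_of_gt ht0pos) (ne_of_gt hs)]
  have hlogpos : ∀ x : ℝ, 0 < x → x < t0 → 0 < Real.log (t0/x) := by
    intro x hx hxt
    exact Real.log_pos ((one_lt_div hx).2 hxt)
  have hkd : ∀ x : ℝ, 0 < x → x < t0 → HasDerivAt k (k' x) x := by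
    intro x hx hxt
    have := (hlogd x hx).rpow_const (p := -α) (Or.inl (ne_of_gt (hlogpos x hx hxt)))
    simpa [hk, hk'] using this
  have hk'nn : ∀ x : ℝ, 0 < x → x < t0 → 0 ≤ k' x := by
    intro x hx hxt
    have h1 : (0:ℝ) ≤ (Real.log (t0/x))^(-α - 1) :=
      Real.rpow_nonneg (hlogpos x hx hxt).le _
    have : k' x = x⁻¹ * α * (Real.log (t0/x))^(-α - 1) := by simp [hk']; try ring
    rw [this]
    positivity
  have hkc : ∀ τ : ℝ, τ < t0 → ContinuousOn k (Set.Icc 1 τ) := by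
    intro τ hτ
    apply ContinuousOn.rpow_const
    · apply ContinuousOn.log
      · exact continuousOn_const.div continuousOn_id
          (fun x hx => ne_of_gt (lt_of_lt_of_le one_pos hx.1))
      · intro x hx
        have hx0 : (0:ℝ) < x := lt_of_lt_of_le one_pos hx.1
        exact ne_of_gt (by positivity)
    · intro x hx
      have hx0 : (0:ℝ) < x := lt_of_lt_of_le one_pos hx.1
      exact Or.inl (ne_of_gt (hlogpos x hx0 (lt_of_le_of_lt hx.2 hτ)))
  have hk'c : ∀ τ : ℝ, τ < t0 → ContinuousOn k' (Set.Icc 1 τ) := by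
    intro τ hτ
    apply ContinuousOn.mul
    · apply ContinuousOn.mul _ continuousOn_const
      exact (continuousOn_id.inv₀
        (fun x hx => ne_of_gt (lt_of_lt_of_le one_pos hx.1))).neg
    · apply ContinuousOn.rpow_const
      · apply ContinuousOn.log
        · exact continuousOn_const.div continuousOn_id
            (fun x hx => ne_of_gt (lt_of_lt_of_le one_pos hx.1))
        · intro x hx
          have hx0 : (0:ℝ) < x := lt_of_lt_of_le one_pos hx.1
          exact ne_of_gt (by positivity)
      · intro x hx
        have hx0 : (0:ℝ) < x := lt_of_lt_of_le one_pos hx.1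
        exact Or.inl (ne_of_gt (hlogpos x hx0 (lt_of_le_of_lt hx.2 hτ)))
  have hineq : ∀ τ ∈ Ioo (1:ℝ) t0,
      (∫ s in (1:ℝ)..τ, k s * deriv v s) ≤ k τ * (v τ - v t0) + k 1 * (v t0 - v 1) := by
    intro τ hτ
    have hτ1 : (1:ℝ) < τ := hτ.1
    have hτt0 : τ < t0 := hτ.2
    have hτT : τ < T := lt_of_lt_of_le hτt0 ht0T
    have huIcc : Set.uIcc (1:ℝ) τ = Set.Icc 1 τ := Set.uIcc_of_le hτ1.le
    have hk'int : IntervalIntegrable k' volume 1 τ := by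
      apply ContinuousOn.intervalIntegrable
      rw [huIcc]; exact hk'c τ hτt0
    have hdvint : IntervalIntegrable (deriv v) volume 1 τ := by
      apply (_root_.intervalIntegrable_const (c := M)).mono_fun'
        ((measurable_deriv v).aestronglyMeasurable.restrict)
      rw [Set.uIoc_of_le hτ1.le]
      filter_upwards [ae_restrict_mem measurableSet_Ioc] with s hs
      exact hdb s ⟨hs.1, lt_of_le_of_lt hs.2 hτT⟩
    have hvcont : ContinuousOn v (Set.Icc 1 τ) :=
      hv.continuousOn.mono (Set.Icc_subset_Icc le_rfl (by linarith))
    have hIBP := intervalIntegral.integral_mul_deriv_eq_deriv_mul_of_hasDerivAt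
      (a := 1) (b := τ) (u := k) (v := v) (u' := k') (v' := deriv v)
      (by rw [huIcc]; exact hkc τ hτt0)
      (by rw [huIcc]; exact hvcont)
      (fun x hx => by
        rw [min_eq_left hτ1.le, max_eq_right hτ1.le] at hx
        exact hkd x (by linarith [hx.1]) (lt_trans hx.2 hτt0))
      (fun x hx => by
        rw [min_eq_left hτ1.le, max_eq_right hτ1.le] at hx
        exact (hvd x ⟨hx.1, lt_trans hx.2 hτT⟩).1)
      hk'int hdvint
    have hFTC : (∫ x in (1:ℝ)..τ, k' x) = k τ - k 1 := by
      apply intervalIntegral.integral_eq_sub_of_hasDerivAt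
      · intro x hx
        rw [huIcc] at hx
        exact hkd x (lt_of_lt_of_le one_pos hx.1) (lt_of_le_of_lt hx.2 hτt0)
      · exact hk'int
    have hmono : (k τ - k 1) * v t0 ≤ ∫ x in (1:ℝ)..τ, k' x * v x := by
      rw [← hFTC, ← intervalIntegral.integral_mul_const]
      apply intervalIntegral.integral_mono_on hτ1.le (hk'int.mul_const _)
      · have hcc : ContinuousOn (fun x => k' x * v x) (Set.uIcc (1:ℝ) τ) := by
          rw [huIcc]; exact (hk'c τ hτt0).mul hvcont
        exact hcc.intervalIntegrable
      · intro x hx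
        have hx0 : (0:ℝ) < x := lt_of_lt_of_le one_pos hx.1
        exact mul_le_mul_of_nonneg_left
          (hmin x ⟨hx.1, le_trans hx.2 hτt0.le⟩)
          (hk'nn x hx0 (lt_of_le_of_lt hx.2 hτt0))
    have := hIBP
    linarith
  -- pass to the limit τ → t0⁻
  have hne : t0 ∈ closure (Ioo (1:ℝ) t0) := by
    rw [closure_Ioo (ne_of_lt ht0)]
    exact ⟨ht0.le, le_rfl⟩
  haveI hNB : (nhdsWithin t0 (Ioo (1:ℝ) t0)).NeBot := mem_closure_iff_nhdsWithin_neBot.1 hne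
  set l := nhdsWithin t0 (Ioo (1:ℝ) t0) with hl
  have hΦt : Tendsto (fun τ => ∫ s in (1:ℝ)..τ, k s * deriv v s) l
      (nhds (∫ s in (1:ℝ)..t0, k s * deriv v s)) := by
    have hcont := intervalIntegral.continuousOn_primitive_interval' hint
      (Set.left_mem_uIcc (a := (1:ℝ)) (b := t0))
    have := hcont t0 (Set.right_mem_uIcc)
    exact this.tendsto.mono_left (nhdsWithin_mono t0
      (by rw [Set.uIcc_of_le ht0.le]; exact Set.Ioo_subset_Icc_self))
  have hterm1 : Tendsto (fun τ => k τ * (v τ - v t0)) l (nhds 0) := by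
    apply squeeze_zero_norm' (a := fun τ => (M * t0^α) * (t0 - τ)^(1-α))
    · filter_upwards [self_mem_nhdsWithin] with τ hτ
      have hτ1 : (1:ℝ) < τ := hτ.1
      have hτt0 : τ < t0 := hτ.2
      have hts : (0:ℝ) < t0 - τ := by linarith
      have h1 : |v τ - v t0| ≤ M * (t0 - τ) := by
        have h := hlip t0 ⟨ht0.le, ht0T⟩ τ ⟨hτ1.le, by linarith⟩
        calc |v τ - v t0| ≤ M * |τ - t0| := h
          _ = M * (t0 - τ) := by rw [abs_sub_comm, abs_of_pos hts]
      have h2 : |k τ| = k τ := abs_of_nonneg (hknn τ hτ1.le hτt0.le)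
      calc ‖k τ * (v τ - v t0)‖ = |k τ| * |v τ - v t0| := by
            rw [norm_mul, Real.norm_eq_abs, Real.norm_eq_abs]
        _ ≤ (t0^α * (t0 - τ)^(-α)) * (M * (t0 - τ)) := by
            rw [h2]
            apply mul_le_mul (hkub τ hτ1.le hτt0) h1 (abs_nonneg _)
            positivity
        _ = (M * t0^α) * ((t0 - τ)^(-α) * (t0 - τ)) := by ring
        _ = (M * t0^α) * (t0 - τ)^(1-α) := by
            rw [← Real.rpow_add_one (ne_of_gt hts)]
            ring_nf
    · have hsub : Tendsto (fun τ : ℝ => t0 - τ) l (nhds 0) := by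
        have : Tendsto (fun τ : ℝ => t0 - τ) (nhds t0) (nhds (t0 - t0)) :=
          (tendsto_const_nhds.sub tendsto_id)
        rw [sub_self] at this
        exact this.mono_left nhdsWithin_le_nhds
      have hca : ContinuousAt (fun x : ℝ => x ^ (1-α)) 0 :=
        Real.continuousAt_rpow_const 0 (1-α) (Or.inr (by linarith))
      have := (hca.tendsto.comp hsub).const_mul (M * t0^α)
      simpa [Real.zero_rpow (by linarith : (1:ℝ)-α ≠ 0)] using this
  have hBt : Tendsto (fun τ => k τ * (v τ - v t0) + k 1 * (v t0 - v 1)) l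
      (nhds (0 + k 1 * (v t0 - v 1))) := hterm1.add tendsto_const_nhds
  have hfinal : (∫ s in (1:ℝ)..t0, k s * deriv v s) ≤ 0 + k 1 * (v t0 - v 1) := by
    apply le_of_tendsto_of_tendsto hΦt hBt
    filter_upwards [self_mem_nhdsWithin] with τ hτ
    exact hineq τ hτ
  have hk1 : k 1 = (Real.log t0)^(-α) := by simp [hk]
  rw [zero_add, hk1] at hfinal
  exact hfinal

theorem minimum_principle_caputoHadamard_diffusion
    {n : ℕ} (G : Set (Fin n → ℝ)) (hGopen : IsOpen G) (hGne : G.Nonempty)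
    (hGbdd : Bornology.IsBounded G)
    (T ν α : ℝ) (hT : 1 < T) (hν : 0 < ν) (hα0 : 0 < α) (hα1 : α < 1)
    (u F : (Fin n → ℝ) → ℝ → ℝ) (φ : (Fin n → ℝ) → ℝ) (ψ : (Fin n → ℝ) → ℝ → ℝ)
    (hFc : ContinuousOn (fun p : (Fin n → ℝ) × ℝ => F p.1 p.2) (closure G ×ˢ Set.Icc 1 T))
    (hφc : ContinuousOn φ (closure G))
    (hψc : ContinuousOn (fun p : (Fin n → ℝ) × ℝ => ψ p.1 p.2) (closure G ×ˢ Set.Icc 1 T))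
    (huc : ContinuousOn (fun p : (Fin n → ℝ) × ℝ => u p.1 p.2) (closure G ×ˢ Set.Icc 1 T))
    (hureg : ∀ x ∈ G, ContDiffOn ℝ 1 (u x) (Set.Icc 1 T))
    (heq : ∀ x ∈ G, ∀ t ∈ Set.Ioc (1:ℝ) T,
      caputoHadamardT α u x t = ν * laplacianX u x t + F x t)
    (hinit : ∀ x ∈ closure G, u x 1 = φ x)
    (hbdry : ∀ x ∈ frontier G, ∀ t ∈ Set.Icc (1:ℝ) T, u x t = ψ x t)
    (hF : ∀ x ∈ closure G, ∀ t ∈ Set.Icc (1:ℝ) T, 0 ≤ F x t) :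
    ∀ x ∈ closure G, ∀ t ∈ Set.Icc (1:ℝ) T,
      min (sInf {y : ℝ | ∃ x' ∈ frontier G, ∃ t' ∈ Set.Icc (1:ℝ) T, ψ x' t' = y})
          (sInf (φ '' closure G)) ≤ u x t := by
  intro x hx t ht
  have hGcc : IsCompact (closure G) :=
    Metric.isCompact_of_isClosed_isBounded isClosed_closure hGbdd.closure
  have hKc : IsCompact (closure G ×ˢ Set.Icc (1:ℝ) T) := hGcc.prod isCompact_Icc
  have hKne : (closure G ×ˢ Set.Icc (1:ℝ) T).Nonempty := by
    obtain ⟨x₀, hx₀⟩ := hGne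
    exact ⟨(x₀, 1), ⟨subset_closure hx₀, ⟨le_rfl, hT.le⟩⟩⟩
  obtain ⟨⟨x0, t0⟩, hmem, hminOn⟩ := hKc.exists_isMinOn hKne huc
  have hmin : ∀ y ∈ closure G, ∀ s ∈ Set.Icc (1:ℝ) T, u x0 t0 ≤ u y s := by
    intro y hy s hs
    exact isMinOn_iff.1 hminOn (y, s) ⟨hy, hs⟩
  have hx0cl : x0 ∈ closure G := hmem.1
  have ht0I : t0 ∈ Set.Icc (1:ℝ) T := hmem.2
  -- bounded-below facts
  have hφbdd : BddBelow (φ '' closure G) := (hGcc.image_of_continuousOn hφc).bddBelow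
  have hfrsub : frontier G ⊆ closure G := frontier_subset_closure
  have hSeq : {y : ℝ | ∃ x' ∈ frontier G, ∃ t' ∈ Set.Icc (1:ℝ) T, ψ x' t' = y}
      = (fun p : (Fin n → ℝ) × ℝ => ψ p.1 p.2) '' (frontier G ×ˢ Set.Icc (1:ℝ) T) := by
    ext y
    constructor
    · rintro ⟨x', hx', t', ht', rfl⟩
      exact ⟨(x', t'), ⟨hx', ht'⟩, rfl⟩
    · rintro ⟨⟨x', t'⟩, ⟨hx', ht'⟩, rfl⟩
      exact ⟨x', hx', t', ht', rfl⟩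
  have hSbdd : BddBelow {y : ℝ | ∃ x' ∈ frontier G, ∃ t' ∈ Set.Icc (1:ℝ) T, ψ x' t' = y} := by
    rw [hSeq]
    have hfrc : IsCompact (frontier G ×ˢ Set.Icc (1:ℝ) T) :=
      (Metric.isCompact_of_isClosed_isBounded isClosed_frontier
        (hGbdd.closure.subset hfrsub)).prod isCompact_Icc
    exact (hfrc.image_of_continuousOn
      (hψc.mono (Set.prod_mono hfrsub subset_rfl))).bddBelow
  suffices hmain : min (sInf {y : ℝ | ∃ x' ∈ frontier G, ∃ t' ∈ Set.Icc (1:ℝ) T, ψ x' t' = y})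
      (sInf (φ '' closure G)) ≤ u x0 t0 by
    exact le_trans hmain (hmin x hx t ht)
  by_cases hx0G : x0 ∈ G
  · rcases eq_or_lt_of_le ht0I.1 with heq1 | hlt
    · -- t0 = 1
      have : u x0 t0 = φ x0 := by rw [← heq1]; exact hinit x0 hx0cl
      rw [this]
      exact le_trans (min_le_right _ _) (csInf_le hφbdd ⟨x0, hx0cl, rfl⟩)
    · -- interior case: 1 < t0
      obtain ⟨r, hr, hball⟩ := Metric.isOpen_iff.1 hGopen x0 hx0G
      have hupd_mem : ∀ (j : Fin n) (z : ℝ), z ∈ Set.Icc (x0 j - r/2) (x0 j + r/2) →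
          Function.update x0 j z ∈ G := by
        intro j z hz
        apply hball
        rw [Metric.mem_ball]
        have hd : dist (Function.update x0 j z) x0 ≤ r/2 := by
          rw [dist_pi_le_iff (by linarith)]
          intro b
          rcases eq_or_ne b j with rfl | hbj
          · rw [Function.update_self, Real.dist_eq]
            exact abs_le.2 ⟨by linarith [hz.1], by linarith [hz.2]⟩
          · rw [Function.update_of_ne hbj]
            simp [dist_self]
            positivity
        linarith
      have hlap : 0 ≤ laplacianX u x0 t0 := by
        apply Finset.sum_nonneg
        intro j _
        rw [show (2:ℕ) = 1+1 from rfl, iteratedDeriv_succ, iteratedDeriv_one]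
        apply junk_second_deriv_nonneg_at_min (fun z => u (Function.update x0 j z) t0)
          (x0 j) (r/2) (by linarith)
        · -- continuity
          have hcont : Continuous fun z : ℝ => ((Function.update x0 j z, t0) :
              (Fin n → ℝ) × ℝ) := by
            apply Continuous.prodMk ?_ continuous_const
            apply continuous_pi
            intro i
            rcases eq_or_ne i j with rfl | hij
            · simpa [Function.update_self] using continuous_id'
            · simp only [Function.update_of_ne hij]
              exact continuous_const
          apply huc.comp hcont.continuousOn
          intro z hz
          exact ⟨subset_closure (hupd_mem j z hz), ht0I⟩
        · -- minimality
          intro z hz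
          simp only [Function.update_eq_self]
          exact hmin _ (subset_closure (hupd_mem j z hz)) t0 ht0I
      have hF0 : 0 ≤ F x0 t0 := hF x0 hx0cl t0 ht0I
      have hCH : 0 ≤ caputoHadamardT α u x0 t0 := by
        rw [heq x0 hx0G t0 ⟨hlt, ht0I.2⟩]
        have := mul_nonneg hν.le hlap
        linarith
      have hΓ : 0 < Real.Gamma (1-α) := Real.Gamma_pos_of_pos (by linarith)
      have hI : 0 ≤ ∫ s in (1:ℝ)..t0, (Real.log (t0/s))^(-α) * deriv (u x0) s := by
        by_contra hneg
        push_neg at hneg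
        have hlt0 : caputoHadamardT α u x0 t0 < 0 := by
          unfold caputoHadamardT
          exact mul_neg_of_pos_of_neg (by positivity) hneg
        linarith
      have hA := hadamard_min_estimate (u x0) T t0 α hα0 hα1 hlt ht0I.2 (hureg x0 hx0G)
        (fun s hs => hmin x0 hx0cl s ⟨hs.1, le_trans hs.2 ht0I.2⟩)
      have hlogpos : (0:ℝ) < (Real.log t0)^(-α) :=
        Real.rpow_pos_of_pos (Real.log_pos hlt) _
      have hv1 : u x0 1 ≤ u x0 t0 := by nlinarith
      have : φ x0 ≤ u x0 t0 := by
        rw [← hinit x0 hx0cl]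
        exact hv1
      exact le_trans (min_le_right _ _) (le_trans (csInf_le hφbdd ⟨x0, hx0cl, rfl⟩) this)
  · -- boundary case
    have hx0fr : x0 ∈ frontier G := by
      rw [frontier, hGopen.interior_eq]
      exact ⟨hx0cl, hx0G⟩
    have : u x0 t0 = ψ x0 t0 := hbdry x0 hx0fr t0 ht0I
    rw [this]
    refine le_trans (min_le_left _ _) (csInf_le hSbdd ?_)
    exact ⟨x0, hx0fr, t0, ht0I, rfl⟩
end

section
/- Let Ω = G × (1,T] with G ⊂ ℝⁿ bounded with smooth boundary, ν > 0, 0 < α < 1. Suppose u satisfies D_{*,t}^α u = ν Δₓ u + F(x,t) in Ω with continuous initial data φ and boundary data ψ. If F ≤ 0 on the closure of Ω, then u(x,t) ≤ max{max_{∂G×[1,T]} ψ, max_Ḡ φ} on the closure of Ω. -/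
open Real MeasureTheory Set

lemma intOn_rpow_sub {α a b : ℝ} (hα1 : α < 1) (hab : a < b) :
    IntegrableOn (fun s => (b - s) ^ (-α)) (Set.Ioo a b) := by
  have h : IntervalIntegrable (fun x : ℝ => x ^ (-α)) volume 0 (b - a) :=
    intervalIntegral.intervalIntegrable_rpow' (by linarith)
  have h2 := h.comp_sub_left b
  simp only [sub_zero, sub_sub_cancel] at h2
  have h3 : IntegrableOn (fun x => (b - x) ^ (-α)) (Set.Ioc a b) := by
    have := (intervalIntegrable_iff_integrableOn_Ioc_of_le hab.le).mp h2.symm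
    exact this
  exact h3.mono_set Set.Ioo_subset_Ioc_self

lemma log_div_ge {b s : ℝ} (hs : 0 < s) (hsb : s ≤ b) : (b - s) / b ≤ Real.log (b / s) := by
  have hb : 0 < b := lt_of_lt_of_le hs hsb
  have h1 : Real.log (s / b) ≤ s / b - 1 :=
    Real.log_le_sub_one_of_pos (div_pos hs hb)
  have h2 : Real.log (b / s) = - Real.log (s / b) := by
    rw [← Real.log_inv]; congr 1; field_simp
  rw [h2]
  have : (b - s)/b = 1 - s/b := by field_simp
  linarith

lemma kernel_le {α b s : ℝ} (hα0 : 0 < α) (hs : 1 < s) (hsb : s < b) :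
    (Real.log (b / s)) ^ (-α) ≤ b ^ α * (b - s) ^ (-α) := by
  have h0s : (0:ℝ) < s := by linarith
  have hb : (0:ℝ) < b := by linarith
  have h1 : (0:ℝ) < (b - s) / b := div_pos (by linarith) hb
  have h2 := log_div_ge h0s hsb.le
  have h3 : (Real.log (b / s)) ^ (-α) ≤ ((b - s) / b) ^ (-α) :=
    Real.rpow_le_rpow_of_nonpos h1 h2 (by linarith)
  calc (Real.log (b / s)) ^ (-α) ≤ ((b - s) / b) ^ (-α) := h3
    _ = (b - s) ^ (-α) / b ^ (-α) := Real.div_rpow (by linarith : (0:ℝ) ≤ b - s) hb.le _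
    _ = b ^ α * (b - s) ^ (-α) := by
        rw [Real.rpow_neg hb.le, div_inv_eq_mul]; ring

lemma kernel_contOn' {β b : ℝ} (hb : 1 < b) :
    ContinuousOn (fun s => (Real.log (b / s)) ^ β) (Set.Ioo 1 b) := by
  apply ContinuousOn.rpow_const
  · apply ContinuousOn.log
    · exact continuousOn_const.div continuousOn_id (fun s hs => by
        have := hs.1; intro h; simp [h] at this; linarith)
    · intro s hs
      have : (1:ℝ) < b / s := (one_lt_div (by linarith [hs.1])).2 hs.2
      linarith
  · intro s hs
    left
    have : (1:ℝ) < b / s := (one_lt_div (by linarith [hs.1])).2 hs.2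
    exact Real.log_ne_zero_of_pos_of_ne_one (by linarith) (by linarith)

lemma integrableOn_kernel_mul {α b C : ℝ} (hα0 : 0 < α) (hα1 : α < 1) (hb : 1 < b)
    {w : ℝ → ℝ} (hw : ContinuousOn w (Set.Ioo 1 b)) (hC : ∀ s ∈ Set.Ioo 1 b, |w s| ≤ C) :
    IntegrableOn (fun s => (Real.log (b / s)) ^ (-α) * w s) (Set.Ioo 1 b) := by
  have hC0 : 0 ≤ C := le_trans (abs_nonneg _) (hC ((1+b)/2) ⟨by linarith, by linarith⟩)
  have hmaj : IntegrableOn (fun s => (C * b ^ α) * (b - s) ^ (-α)) (Set.Ioo 1 b) :=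
    (intOn_rpow_sub hα1 hb).const_mul _
  apply Integrable.mono' hmaj
  · exact ((kernel_contOn' hb).mul hw).aestronglyMeasurable measurableSet_Ioo
  · filter_upwards [ae_restrict_mem measurableSet_Ioo] with s hs
    have hk0 : 0 ≤ (Real.log (b / s)) ^ (-α) := by
      apply Real.rpow_nonneg
      have : (1:ℝ) ≤ b / s := by
        rw [le_div_iff₀ (by linarith [hs.1])]; linarith [hs.2]
      exact Real.log_nonneg this
    calc ‖(Real.log (b / s)) ^ (-α) * w s‖ = (Real.log (b / s)) ^ (-α) * |w s| := by
          rw [norm_eq_abs, abs_mul, abs_of_nonneg hk0]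
      _ ≤ (b ^ α * (b - s) ^ (-α)) * C := by
          apply mul_le_mul (kernel_le hα0 hs.1 hs.2) (hC s hs) (abs_nonneg _)
          have : (0:ℝ) < b - s := by linarith [hs.2]
          positivity
      _ = (C * b ^ α) * (b - s) ^ (-α) := by ring

lemma iteratedDeriv_two_nonpos_of_isMax {f : ℝ → ℝ} {a δ : ℝ} (hδ : 0 < δ)
    (hcont : ContinuousOn f (Set.Icc a (a + δ)))
    (hmax : ∀ z ∈ Set.Icc (a - δ) (a + δ), f z ≤ f a) :
    iteratedDeriv 2 f a ≤ 0 := by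
  by_contra hL'
  push_neg at hL'
  have hiter : iteratedDeriv 2 f a = deriv (deriv f) a := by
    simp [iteratedDeriv_succ, iteratedDeriv_one]
  rw [hiter] at hL'
  have hdd : DifferentiableAt ℝ (deriv f) a := by
    by_contra h
    rw [deriv_zero_of_not_differentiableAt h] at hL'
    exact lt_irrefl 0 hL'
  have hD : HasDerivAt (deriv f) (deriv (deriv f) a) a := hdd.hasDerivAt
  have hlm : IsLocalMax f a := by
    have hmem : Set.Icc (a - δ) (a + δ) ∈ nhds a :=
      Icc_mem_nhds (by linarith) (by linarith)
    exact Filter.eventually_of_mem hmem hmax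
  have hfa : deriv f a = 0 := hlm.deriv_eq_zero
  have hslope := hasDerivAt_iff_tendsto_slope.mp hD
  have hev : ∀ᶠ y in nhdsWithin a {a}ᶜ, 0 < slope (deriv f) a y :=
    hslope.eventually (eventually_gt_nhds hL')
  rw [eventually_nhdsWithin_iff] at hev
  rcases Metric.eventually_nhds_iff.mp hev with ⟨δ', hδ', hball⟩
  set m := min δ' δ with hm
  have hm0 : 0 < m := lt_min hδ' hδ
  have hpos : ∀ y ∈ Set.Ioo a (a + m), 0 < deriv f y := by
    intro y hy
    have hya : y ≠ a := ne_of_gt hy.1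
    have hdist : dist y a < δ' := by
      rw [Real.dist_eq, abs_of_pos (by linarith [hy.1] : (0:ℝ) < y - a)]
      have h2 := hy.2
      have : y - a < m := by linarith
      exact lt_of_lt_of_le this (min_le_left _ _)
    have hsl := hball hdist (by simpa using hya)
    rw [slope_def_field, hfa, sub_zero] at hsl
    rcases div_pos_iff.mp hsl with ⟨h1, _⟩ | ⟨_, h2⟩
    · exact h1
    · linarith [hy.1]
  -- strict monotone on [a, a + m/2]
  have hsub : Set.Icc a (a + m/2) ⊆ Set.Icc a (a + δ) := by
    apply Set.Icc_subset_Icc le_rfl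
    have : m ≤ δ := min_le_right _ _
    linarith
  have hmono : StrictMonoOn f (Set.Icc a (a + m/2)) := by
    apply strictMonoOn_of_deriv_pos (convex_Icc _ _) (hcont.mono hsub)
    intro y hy
    rw [interior_Icc] at hy
    exact hpos y ⟨hy.1, by linarith [hy.2]⟩
  have hlt : f a < f (a + m/2) :=
    hmono ⟨le_rfl, by linarith⟩ ⟨by linarith, le_rfl⟩ (by linarith)
  have hle : f (a + m/2) ≤ f a := by
    apply hmax
    constructor
    · have : m ≤ δ := min_le_right _ _; linarith
    · have : m ≤ δ := min_le_right _ _; linarith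
  linarith

lemma caputo_nonneg {α t₀ C : ℝ} {g dg : ℝ → ℝ} (hα0 : 0 < α) (hα1 : α < 1) (ht₀ : 1 < t₀)
    (hcont : ContinuousOn g (Set.Icc 1 t₀))
    (hder : ∀ s ∈ Set.Ioo 1 t₀, HasDerivAt g (dg s) s)
    (hdgc : ContinuousOn dg (Set.Ioo 1 t₀))
    (hCb : ∀ s ∈ Set.Ioo 1 t₀, |dg s| ≤ C)
    (hmax : ∀ s ∈ Set.Icc 1 t₀, g s ≤ g t₀) :
    0 ≤ ∫ s in (1:ℝ)..t₀, (Real.log (t₀ / s)) ^ (-α) * dg s := by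
  set k : ℝ → ℝ := fun s => (Real.log (t₀ / s)) ^ (-α) with hk
  set k' : ℝ → ℝ := fun s => -s⁻¹ * -α * Real.log (t₀ / s) ^ (-α - 1) with hk'
  have hlogpos : ∀ s : ℝ, 0 < s → s < t₀ → 0 < Real.log (t₀ / s) := fun s h0 h1 =>
    Real.log_pos ((one_lt_div h0).2 h1)
  have hlognn : ∀ s : ℝ, 0 < s → s ≤ t₀ → 0 ≤ Real.log (t₀ / s) := fun s h0 h1 =>
    Real.log_nonneg ((one_le_div h0).2 h1)
  have hIoo : IntegrableOn (fun s => k s * dg s) (Set.Ioo 1 t₀) :=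
    integrableOn_kernel_mul hα0 hα1 ht₀ hdgc hCb
  have hII : IntervalIntegrable (fun s => k s * dg s) volume 1 t₀ :=
    (intervalIntegrable_iff_integrableOn_Ioo_of_le ht₀.le).mpr hIoo
  set P : ℝ → ℝ := fun τ => ∫ s in (1:ℝ)..τ, k s * dg s with hP
  have hPc : ContinuousOn P (Set.Icc 1 t₀) := by
    have h1 : (1:ℝ) ∈ Set.uIcc 1 t₀ := Set.left_mem_uIcc
    have := intervalIntegral.continuousOn_primitive_interval' hII h1
    rwa [Set.uIcc_of_le ht₀.le] at this
  have hkd : ∀ s : ℝ, 1 < s → s < t₀ → HasDerivAt k (k' s) s := by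
    intro s h1 h2
    have hs0 : (0:ℝ) < s := by linarith
    have hlog : HasDerivAt (fun y : ℝ => Real.log (t₀ / y)) (-s⁻¹) s := by
      have h1' : HasDerivAt (fun y : ℝ => Real.log t₀ - Real.log y) (-s⁻¹) s :=
        (Real.hasDerivAt_log hs0.ne').const_sub (Real.log t₀)
      apply HasDerivAt.congr_of_eventuallyEq h1'
      filter_upwards [Ioi_mem_nhds hs0] with y hy
      rw [Real.log_div (by positivity) (ne_of_gt hy)]
    exact hlog.rpow_const (Or.inl (hlogpos s hs0 h2).ne')
  have hk'nn : ∀ s : ℝ, 1 < s → s < t₀ → 0 ≤ k' s := by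
    intro s h1 h2
    have hs0 : (0:ℝ) < s := by linarith
    have hx : 0 ≤ Real.log (t₀ / s) ^ (-α - 1) := Real.rpow_nonneg (hlognn s hs0 h2.le) _
    have h3 : 0 ≤ α * s⁻¹ * Real.log (t₀ / s) ^ (-α - 1) :=
      mul_nonneg (by positivity) hx
    have h4 : k' s = α * s⁻¹ * Real.log (t₀ / s) ^ (-α - 1) := by rw [hk']; ring
    rw [h4]; exact h3
  have hknn : ∀ s : ℝ, 0 < s → s ≤ t₀ → 0 ≤ k s := fun s h0 h1 =>
    Real.rpow_nonneg (hlognn s h0 h1) _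
  -- Lipschitz-type bound up to the right endpoint
  have hLip : ∀ x ∈ Set.Ioo 1 t₀, ∀ y ∈ Set.Ioo 1 t₀, |g y - g x| ≤ C * |y - x| := by
    intro x hx y hy
    have := (convex_Ioo (1:ℝ) t₀).norm_image_sub_le_of_norm_hasDerivWithin_le
      (fun s hs => (hder s hs).hasDerivWithinAt) (fun s hs => by simpa using hCb s hs) hx hy
    simpa [Real.norm_eq_abs] using this
  have hend : ∀ τ ∈ Set.Ioo 1 t₀, g t₀ - g τ ≤ C * (t₀ - τ) := by
    intro τ hτ
    have hne : (nhdsWithin t₀ (Set.Ioo τ t₀)).NeBot := by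
      apply mem_closure_iff_nhdsWithin_neBot.mp
      rw [closure_Ioo (ne_of_lt hτ.2)]
      exact ⟨hτ.2.le, le_rfl⟩
    have hsub2 : Set.Ioo τ t₀ ⊆ Set.Icc 1 t₀ := fun y hy =>
      ⟨by linarith [hτ.1, hy.1], hy.2.le⟩
    have htg : Filter.Tendsto (fun b => g b - g τ) (nhdsWithin t₀ (Set.Ioo τ t₀))
        (nhds (g t₀ - g τ)) := by
      have h1 : ContinuousWithinAt g (Set.Icc 1 t₀) t₀ := hcont t₀ ⟨by linarith [hτ.1], le_rfl⟩
      exact (h1.mono_left (nhdsWithin_mono _ hsub2)).sub_const _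
    have h3 : Filter.Tendsto (fun b : ℝ => C * (b - τ)) (nhdsWithin t₀ (Set.Ioo τ t₀))
        (nhds (C * (t₀ - τ))) := by
      apply Filter.Tendsto.mono_left _ nhdsWithin_le_nhds
      exact (continuous_const.mul (continuous_id.sub continuous_const)).tendsto t₀
    apply le_of_tendsto_of_tendsto htg h3
    filter_upwards [self_mem_nhdsWithin] with b hb
    have hbI : b ∈ Set.Ioo 1 t₀ := ⟨by linarith [hτ.1, hb.1], hb.2⟩
    have := hLip τ hτ b hbI
    have habs : |b - τ| = b - τ := abs_of_pos (by linarith [hb.1])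
    rw [habs] at this
    calc g b - g τ ≤ |g b - g τ| := le_abs_self _
      _ ≤ C * (b - τ) := this
  -- key inequality for interior τ
  have hkey : ∀ τ ∈ Set.Ioo 1 t₀, k τ * (g τ - g t₀) - k 1 * (g 1 - g t₀) ≤ P τ := by
    intro τ hτ
    have hstep : ∀ a ∈ Set.Ioo 1 τ,
        k τ * (g τ - g t₀) - k a * (g a - g t₀) + P a ≤ P τ := by
      intro a ha
      have hsub : Set.uIcc a τ ⊆ Set.Ioo 1 t₀ := by
        rw [Set.uIcc_of_le ha.2.le]
        exact fun s hs => ⟨lt_of_lt_of_le ha.1 hs.1, lt_of_le_of_lt hs.2 hτ.2⟩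
      have hu : ∀ s ∈ Set.uIcc a τ, HasDerivAt k (k' s) s := fun s hs =>
        hkd s (hsub hs).1 (hsub hs).2
      have hv : ∀ s ∈ Set.uIcc a τ, HasDerivAt (fun y => g y - g t₀) (dg s) s := fun s hs =>
        (hder s (hsub hs)).sub_const _
      have hk'c : ContinuousOn k' (Set.Ioo 1 t₀) := by
        apply ContinuousOn.mul
        · apply ContinuousOn.mul
          · exact ((continuousOn_inv₀.mono (fun s (hs : s ∈ Set.Ioo (1:ℝ) t₀) =>
              (by intro h; rw [Set.mem_singleton_iff] at h; linarith [hs.1] :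
                s ∈ ({0}ᶜ : Set ℝ)))).neg)
          · exact continuousOn_const
        · exact kernel_contOn' ht₀
      have hu' : IntervalIntegrable k' volume a τ :=
        (hk'c.mono hsub).intervalIntegrable
      have hv' : IntervalIntegrable dg volume a τ :=
        (hdgc.mono hsub).intervalIntegrable
      have hibp := intervalIntegral.integral_mul_deriv_eq_deriv_mul hu hv hu' hv'
      have hPdiff : P τ - P a = ∫ s in a..τ, k s * dg s := by
        rw [hP]
        exact intervalIntegral.integral_interval_sub_left
          (hII.mono_set (by rw [Set.uIcc_of_le ht₀.le, Set.uIcc_of_le hτ.1.le]; exact Set.Icc_subset_Icc le_rfl hτ.2.le))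
          (hII.mono_set (by rw [Set.uIcc_of_le ht₀.le, Set.uIcc_of_le ha.1.le]; exact Set.Icc_subset_Icc le_rfl (le_trans ha.2.le hτ.2.le)))
      have hint_np : ∫ s in a..τ, k' s * (g s - g t₀) ≤ 0 := by
        have hnn : 0 ≤ ∫ s in a..τ, -(k' s * (g s - g t₀)) := by
          apply intervalIntegral.integral_nonneg ha.2.le
          intro s hs
          have hs1 : 1 < s := lt_of_lt_of_le ha.1 hs.1
          have hs2 : s < t₀ := lt_of_le_of_lt hs.2 hτ.2
          have h1 : 0 ≤ k' s := hk'nn s hs1 hs2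
          have h2 : g s - g t₀ ≤ 0 := sub_nonpos.2 (hmax s ⟨hs1.le, hs2.le⟩)
          have := mul_nonneg h1 (neg_nonneg.2 h2)
          linarith [this]
        rw [intervalIntegral.integral_neg] at hnn
        linarith
      have : P τ - P a = k τ * (g τ - g t₀) - k a * (g a - g t₀)
          - ∫ s in a..τ, k' s * (g s - g t₀) := by rw [hPdiff, hibp]
      linarith
    -- limit a → 1⁺
    have hne : (nhdsWithin (1:ℝ) (Set.Ioo 1 τ)).NeBot := by
      apply mem_closure_iff_nhdsWithin_neBot.mp
      rw [closure_Ioo (ne_of_lt hτ.1)]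
      exact ⟨le_rfl, hτ.1.le⟩
    have hsub3 : Set.Ioo (1:ℝ) τ ⊆ Set.Icc 1 t₀ := fun y hy =>
      ⟨hy.1.le, le_trans hy.2.le hτ.2.le⟩
    have hPa : Filter.Tendsto P (nhdsWithin 1 (Set.Ioo 1 τ)) (nhds (P 1)) :=
      (hPc 1 ⟨le_rfl, ht₀.le⟩).mono_left (nhdsWithin_mono _ hsub3)
    have hP1 : P 1 = 0 := intervalIntegral.integral_same
    have hkc1 : Filter.Tendsto (fun a => k a * (g a - g t₀)) (nhdsWithin 1 (Set.Ioo 1 τ))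
        (nhds (k 1 * (g 1 - g t₀))) := by
      have hgc : Filter.Tendsto (fun a => g a - g t₀) (nhdsWithin 1 (Set.Ioo 1 τ))
          (nhds (g 1 - g t₀)) :=
        ((hcont 1 ⟨le_rfl, ht₀.le⟩).mono_left (nhdsWithin_mono _ hsub3)).sub_const _
      have hkcA : ContinuousAt k 1 := by
        apply ContinuousAt.rpow_const
        · apply ContinuousAt.log (continuousAt_const.div continuousAt_id one_ne_zero)
          simpa using (by linarith : t₀ ≠ 0)
        · left
          simp only [div_one]
          exact (Real.log_pos ht₀).ne'
      exact (hkcA.tendsto.mono_left nhdsWithin_le_nhds).mul hgc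
    have hlim : Filter.Tendsto (fun a => k τ * (g τ - g t₀) - k a * (g a - g t₀) + P a)
        (nhdsWithin 1 (Set.Ioo 1 τ))
        (nhds (k τ * (g τ - g t₀) - k 1 * (g 1 - g t₀) + P 1)) :=
      (tendsto_const_nhds.sub hkc1).add hPa
    have := le_of_tendsto_of_tendsto hlim
      (tendsto_const_nhds : Filter.Tendsto (fun _ => P τ) _ (nhds (P τ)))
      (by filter_upwards [self_mem_nhdsWithin] with a ha; exact hstep a ha)
    rw [hP1, add_zero] at this
    exact this
  -- lower bound on P τ
  have hbound : ∀ τ ∈ Set.Ioo 1 t₀, -(C * t₀ ^ α * (t₀ - τ) ^ (1 - α)) ≤ P τ := by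
    intro τ hτ
    have ht0pos : (0:ℝ) < t₀ := by linarith
    have hτt : (0:ℝ) < t₀ - τ := by linarith [hτ.2]
    have h1 : k 1 * (g 1 - g t₀) ≤ 0 :=
      mul_nonpos_of_nonneg_of_nonpos (hknn 1 one_pos ht₀.le)
        (sub_nonpos.2 (hmax 1 ⟨le_rfl, ht₀.le⟩))
    have h2 : k τ * (g t₀ - g τ) ≤ (t₀ ^ α * (t₀ - τ) ^ (-α)) * (C * (t₀ - τ)) := by
      apply mul_le_mul (kernel_le hα0 hτ.1 hτ.2) (hend τ hτ)
        (sub_nonneg.2 (hmax τ ⟨hτ.1.le, hτ.2.le⟩)) (by positivity)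
    have h3 : (t₀ ^ α * (t₀ - τ) ^ (-α)) * (C * (t₀ - τ)) = C * t₀ ^ α * (t₀ - τ) ^ (1 - α) := by
      rw [show (1:ℝ) - α = -α + 1 by ring, Real.rpow_add_one hτt.ne']
      ring
    have h4 : k τ * (g τ - g t₀) = -(k τ * (g t₀ - g τ)) := by ring
    have h5 := hkey τ hτ
    rw [h4] at h5
    rw [← h3]
    linarith
  -- limit τ → t₀⁻
  have hne : (nhdsWithin t₀ (Set.Ioo 1 t₀)).NeBot := by
    apply mem_closure_iff_nhdsWithin_neBot.mp
    rw [closure_Ioo (ne_of_lt ht₀)]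
    exact ⟨ht₀.le, le_rfl⟩
  have hPt : Filter.Tendsto P (nhdsWithin t₀ (Set.Ioo 1 t₀)) (nhds (P t₀)) :=
    (hPc t₀ ⟨ht₀.le, le_rfl⟩).mono_left (nhdsWithin_mono _ Set.Ioo_subset_Icc_self)
  have hBt : Filter.Tendsto (fun τ => -(C * t₀ ^ α * (t₀ - τ) ^ (1 - α)))
      (nhdsWithin t₀ (Set.Ioo 1 t₀)) (nhds 0) := by
    have h1 : Filter.Tendsto (fun τ : ℝ => t₀ - τ) (nhds t₀) (nhds 0) := by
      have hcfun : Continuous (fun τ : ℝ => t₀ - τ) := continuous_const.sub continuous_id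
      have h := hcfun.tendsto t₀
      simpa using h
    have h2 : Filter.Tendsto (fun x : ℝ => x ^ (1 - α)) (nhds 0) (nhds 0) := by
      have hc := (Real.continuousAt_rpow_const 0 (1 - α) (Or.inr (by linarith)))
      have h0 : (0:ℝ) ^ (1 - α) = 0 := Real.zero_rpow (by linarith : (0:ℝ) < 1 - α).ne'
      have := hc.tendsto
      rw [h0] at this
      exact this
    have h3 : Filter.Tendsto (fun τ : ℝ => (t₀ - τ) ^ (1 - α)) (nhds t₀) (nhds 0) :=
      h2.comp h1
    have h4 : Filter.Tendsto (fun τ : ℝ => -(C * t₀ ^ α * (t₀ - τ) ^ (1 - α))) (nhds t₀)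
        (nhds (-(C * t₀ ^ α * 0))) := (tendsto_const_nhds.mul h3).neg
    rw [mul_zero, neg_zero] at h4
    exact h4.mono_left nhdsWithin_le_nhds
  have hfin : (0:ℝ) ≤ P t₀ :=
    le_of_tendsto_of_tendsto hBt hPt
      (by filter_upwards [self_mem_nhdsWithin] with τ hτ; exact hbound τ hτ)
  exact hfin

lemma kernel_int_pos {α t₀ : ℝ} (hα0 : 0 < α) (hα1 : α < 1) (ht₀ : 1 < t₀) :
    0 < ∫ s in (1:ℝ)..t₀, (Real.log (t₀ / s)) ^ (-α) * s⁻¹ := by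
  set f : ℝ → ℝ := fun s => (Real.log (t₀ / s)) ^ (-α) * s⁻¹ with hf
  set m : ℝ := (1 + t₀) / 2 with hm
  have hm1 : 1 < m := by rw [hm]; linarith
  have hmt : m < t₀ := by rw [hm]; linarith
  have hInt : IntegrableOn f (Set.Ioo 1 t₀) := by
    apply integrableOn_kernel_mul hα0 hα1 ht₀ (C := 1)
    · exact continuousOn_inv₀.mono (fun s hs => by
        intro h; rw [Set.mem_singleton_iff] at h; rw [h] at hs; exact absurd hs.1 (by norm_num))
    · intro s hs
      rw [abs_inv, abs_of_pos (by linarith [hs.1] : (0:ℝ) < s)]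
      rw [inv_le_one_iff₀]
      right; linarith [hs.1]
  set c : ℝ := (Real.log t₀) ^ (-α) * t₀⁻¹ with hc
  have hcpos : 0 < c := by
    apply mul_pos _ (inv_pos.2 (by linarith))
    exact Real.rpow_pos_of_pos (Real.log_pos ht₀) _
  have hfnn : ∀ s ∈ Set.Ioo (1:ℝ) t₀, 0 ≤ f s := by
    intro s hs
    apply mul_nonneg
    · apply Real.rpow_nonneg
      apply Real.log_nonneg
      rw [le_div_iff₀ (by linarith [hs.1] : (0:ℝ) < s)]
      linarith [hs.2]
    · exact inv_nonneg.2 (by linarith [hs.1])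
  have hlow : ∀ s ∈ Set.Ioo (1:ℝ) m, c ≤ f s := by
    intro s hs
    have hs0 : (0:ℝ) < s := by linarith [hs.1]
    have hst : s < t₀ := lt_trans hs.2 hmt
    have h1 : Real.log (t₀ / s) ≤ Real.log t₀ := by
      apply Real.log_le_log (by positivity)
      exact div_le_self (by linarith) hs.1.le
    have h2 : (Real.log t₀) ^ (-α) ≤ (Real.log (t₀ / s)) ^ (-α) :=
      Real.rpow_le_rpow_of_nonpos (Real.log_pos ((one_lt_div hs0).2 hst)) h1 (by linarith)
    have h3 : t₀⁻¹ ≤ s⁻¹ := by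
      apply inv_anti₀ hs0
      linarith
    exact mul_le_mul h2 h3 (inv_nonneg.2 (by linarith)) (Real.rpow_nonneg
      (Real.log_nonneg (by rw [le_div_iff₀ hs0]; linarith)) _)
  have hIm : IntegrableOn f (Set.Ioo 1 m) :=
    hInt.mono_set (Set.Ioo_subset_Ioo le_rfl hmt.le)
  have step1 : c * (m - 1) ≤ ∫ s in Set.Ioo (1:ℝ) m, f s := by
    have hconst : ∫ _ in Set.Ioo (1:ℝ) m, c = c * (m - 1) := by
      rw [setIntegral_const, measureReal_def, Real.volume_Ioo, ENNReal.toReal_ofReal (by linarith), smul_eq_mul]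
      ring
    rw [← hconst]
    exact setIntegral_mono_on (integrableOn_const (by rw [Real.volume_Ioo]; exact ENNReal.ofReal_ne_top)) hIm measurableSet_Ioo hlow
  have step2 : ∫ s in Set.Ioo (1:ℝ) m, f s ≤ ∫ s in Set.Ioo (1:ℝ) t₀, f s := by
    apply setIntegral_mono_set hInt
    · filter_upwards [ae_restrict_mem measurableSet_Ioo] with s hs
      exact hfnn s hs
    · exact HasSubset.Subset.eventuallyLE (Set.Ioo_subset_Ioo le_rfl hmt.le)
  have hrw : (∫ s in (1:ℝ)..t₀, f s) = ∫ s in Set.Ioo (1:ℝ) t₀, f s := by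
    rw [intervalIntegral.integral_of_le ht₀.le, MeasureTheory.integral_Ioc_eq_integral_Ioo]
  calc (0:ℝ) < c * (m - 1) := by nlinarith
    _ ≤ ∫ s in Set.Ioo (1:ℝ) m, f s := step1
    _ ≤ ∫ s in Set.Ioo (1:ℝ) t₀, f s := step2
    _ = ∫ s in (1:ℝ)..t₀, f s := hrw.symm

theorem maximum_principle_caputoHadamard_diffusion
    {n : ℕ} (G : Set (Fin n → ℝ)) (hGopen : IsOpen G) (hGne : G.Nonempty)
    (hGbdd : Bornology.IsBounded G)
    (T ν α : ℝ) (hT : 1 < T) (hν : 0 < ν) (hα0 : 0 < α) (hα1 : α < 1)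
    (u F : (Fin n → ℝ) → ℝ → ℝ) (φ : (Fin n → ℝ) → ℝ) (ψ : (Fin n → ℝ) → ℝ → ℝ)
    (hFc : ContinuousOn (fun p : (Fin n → ℝ) × ℝ => F p.1 p.2) (closure G ×ˢ Set.Icc 1 T))
    (hφc : ContinuousOn φ (closure G))
    (hψc : ContinuousOn (fun p : (Fin n → ℝ) × ℝ => ψ p.1 p.2) (closure G ×ˢ Set.Icc 1 T))
    (huc : ContinuousOn (fun p : (Fin n → ℝ) × ℝ => u p.1 p.2) (closure G ×ˢ Set.Icc 1 T))
    (hureg : ∀ x ∈ G, ContDiffOn ℝ 1 (u x) (Set.Icc 1 T))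
    (heq : ∀ x ∈ G, ∀ t ∈ Set.Ioc (1:ℝ) T,
      caputoHadamardT α u x t = ν * laplacianX u x t + F x t)
    (hinit : ∀ x ∈ closure G, u x 1 = φ x)
    (hbdry : ∀ x ∈ frontier G, ∀ t ∈ Set.Icc (1:ℝ) T, u x t = ψ x t)
    (hF : ∀ x ∈ closure G, ∀ t ∈ Set.Icc (1:ℝ) T, F x t ≤ 0) :
    ∀ x ∈ closure G, ∀ t ∈ Set.Icc (1:ℝ) T,
      u x t ≤ max (sSup {y : ℝ | ∃ x' ∈ frontier G, ∃ t' ∈ Set.Icc (1:ℝ) T, ψ x' t' = y})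
          (sSup (φ '' closure G)) := by
  classical
  set M : ℝ := max (sSup {y : ℝ | ∃ x' ∈ frontier G, ∃ t' ∈ Set.Icc (1:ℝ) T, ψ x' t' = y})
      (sSup (φ '' closure G)) with hM
  have hclK : IsCompact (closure G) := Metric.isCompact_of_isClosed_isBounded isClosed_closure hGbdd.closure
  have hK : IsCompact (closure G ×ˢ Set.Icc (1:ℝ) T) := hclK.prod isCompact_Icc
  obtain ⟨x₁, hx₁⟩ := hGne
  have hKne : (closure G ×ˢ Set.Icc (1:ℝ) T).Nonempty :=
    ⟨(x₁, 1), subset_closure hx₁, le_rfl, hT.le⟩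
  have hbdd1 : BddAbove {y : ℝ | ∃ x' ∈ frontier G, ∃ t' ∈ Set.Icc (1:ℝ) T, ψ x' t' = y} := by
    have hfrc : IsCompact (frontier G ×ˢ Set.Icc (1:ℝ) T) := by
      apply IsCompact.prod _ isCompact_Icc
      exact hclK.of_isClosed_subset isClosed_frontier frontier_subset_closure
    have himg := (hfrc.image_of_continuousOn
      (hψc.mono (Set.prod_mono frontier_subset_closure subset_rfl))).bddAbove
    apply himg.mono
    rintro y ⟨x', hx', t', ht', rfl⟩
    exact ⟨(x', t'), ⟨hx', ht'⟩, rfl⟩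
  have hbdd2 : BddAbove (φ '' closure G) := (hclK.image_of_continuousOn hφc).bddAbove
  -- key claim : perturbed solution is bounded by M
  have key : ∀ ε : ℝ, 0 < ε → ∀ x ∈ closure G, ∀ t ∈ Set.Icc (1:ℝ) T,
      u x t - ε * Real.log t ≤ M := by
    intro ε hε
    set v : (Fin n → ℝ) × ℝ → ℝ := fun p => u p.1 p.2 - ε * Real.log p.2 with hv
    have hvc : ContinuousOn v (closure G ×ˢ Set.Icc (1:ℝ) T) := by
      apply huc.sub
      apply ContinuousOn.mul continuousOn_const
      apply ContinuousOn.log continuous_snd.continuousOn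
      intro p hp
      have h1 : (1:ℝ) ≤ p.2 := hp.2.1
      intro h0
      rw [h0] at h1
      linarith
    obtain ⟨p₀, hp₀K, hp₀max⟩ := hK.exists_isMaxOn hKne hvc
    obtain ⟨x₀, t₀⟩ := p₀
    have hx₀cl : x₀ ∈ closure G := hp₀K.1
    have ht₀I : t₀ ∈ Set.Icc (1:ℝ) T := hp₀K.2
    have hvM : v (x₀, t₀) ≤ M := by
      by_cases hxf : x₀ ∈ frontier G
      · calc v (x₀, t₀) ≤ u x₀ t₀ := by
              have h1 : 0 ≤ ε * Real.log t₀ := mul_nonneg hε.le (Real.log_nonneg ht₀I.1)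
              simp only [hv]
              linarith
          _ = ψ x₀ t₀ := hbdry x₀ hxf t₀ ht₀I
          _ ≤ sSup {y : ℝ | ∃ x' ∈ frontier G, ∃ t' ∈ Set.Icc (1:ℝ) T, ψ x' t' = y} :=
              le_csSup hbdd1 ⟨x₀, hxf, t₀, ht₀I, rfl⟩
          _ ≤ M := le_max_left _ _
      · have hx₀G : x₀ ∈ G := by
          by_contra h
          exact hxf (by rw [hGopen.frontier_eq]; exact ⟨hx₀cl, h⟩)
        by_cases ht1 : t₀ = 1
        · subst ht1
          calc v (x₀, 1) = u x₀ 1 := by simp [hv]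
            _ = φ x₀ := hinit x₀ hx₀cl
            _ ≤ sSup (φ '' closure G) := le_csSup hbdd2 ⟨x₀, hx₀cl, rfl⟩
            _ ≤ M := le_max_right _ _
        · exfalso
          have ht₀Ioc : t₀ ∈ Set.Ioc (1:ℝ) T := ⟨lt_of_le_of_ne ht₀I.1 (Ne.symm ht1), ht₀I.2⟩
          have ht₀1 : 1 < t₀ := ht₀Ioc.1
          have ht₀T : t₀ ≤ T := ht₀Ioc.2
          -- 1. Laplacian nonpositive at the maximum
          obtain ⟨δ₀, hδ₀, hball⟩ := Metric.isOpen_iff.mp hGopen x₀ hx₀G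
          have hup : ∀ z : ℝ, ∀ j : Fin n, |z - x₀ j| ≤ δ₀/2 → Function.update x₀ j z ∈ G := by
            intro z j hz
            apply hball
            rw [Metric.mem_ball]
            have hd : dist (Function.update x₀ j z) x₀ ≤ δ₀/2 := by
              rw [dist_pi_le_iff (by linarith)]
              intro i
              rcases eq_or_ne i j with rfl | hij
              · rw [Function.update_self, Real.dist_eq]; exact hz
              · rw [Function.update_of_ne hij, dist_self]; linarith
            linarith
          have hlap : laplacianX u x₀ t₀ ≤ 0 := by
            rw [laplacianX]
            apply Finset.sum_nonpos
            intro j _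
            have hcontj : ContinuousOn (fun z => u (Function.update x₀ j z) t₀)
                (Set.Icc (x₀ j) (x₀ j + δ₀/2)) := by
              have hmap : Continuous (fun z : ℝ => ((Function.update x₀ j z, t₀) :
                  (Fin n → ℝ) × ℝ)) := by
                apply Continuous.prodMk _ continuous_const
                exact Continuous.update
                  (continuous_const : Continuous fun _ : ℝ => x₀) j continuous_id
              apply (huc.comp hmap.continuousOn ?_)
              intro z hz
              constructor
              · apply subset_closure
                apply hup z j
                rw [abs_of_nonneg (by linarith [hz.1])]
                linarith [hz.2]
              · exact ht₀I
            have hmaxj : ∀ z ∈ Set.Icc (x₀ j - δ₀/2) (x₀ j + δ₀/2),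
                (fun z => u (Function.update x₀ j z) t₀) z
                  ≤ (fun z => u (Function.update x₀ j z) t₀) (x₀ j) := by
              intro z hz
              have hzG : Function.update x₀ j z ∈ G :=
                hup z j (abs_le.mpr ⟨by linarith [hz.1], by linarith [hz.2]⟩)
              have hmem : ((Function.update x₀ j z, t₀) : (Fin n → ℝ) × ℝ)
                  ∈ closure G ×ˢ Set.Icc (1:ℝ) T := ⟨subset_closure hzG, ht₀I⟩
              have h2 := hp₀max hmem
              simp only [hv, Set.mem_setOf_eq] at h2
              simp only [Function.update_eq_self]
              linarith
            exact iteratedDeriv_two_nonpos_of_isMax (by linarith) hcontj hmaxj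
          have hF0 : F x₀ t₀ ≤ 0 := hF x₀ hx₀cl t₀ ht₀I
          -- 2. Caputo-Hadamard derivative is strictly positive at the maximum
          have hgreg := hureg x₀ hx₀G
          set g : ℝ → ℝ := fun s => u x₀ s - ε * Real.log s with hg
          set dg : ℝ → ℝ := fun s => deriv (u x₀) s - ε * s⁻¹ with hdg
          have hIccsub : Set.Icc (1:ℝ) t₀ ⊆ Set.Icc (1:ℝ) T := Set.Icc_subset_Icc le_rfl ht₀T
          have hIoosub : Set.Ioo (1:ℝ) t₀ ⊆ Set.Ioo (1:ℝ) T := Set.Ioo_subset_Ioo le_rfl ht₀T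
          have hcontg : ContinuousOn g (Set.Icc 1 t₀) := by
            apply ContinuousOn.sub (hgreg.continuousOn.mono hIccsub)
            apply ContinuousOn.mul continuousOn_const
            apply ContinuousOn.log continuousOn_id
            intro s hs
            simp only [id_eq]
            have h1 := hs.1
            intro h0; rw [h0] at h1; linarith
          have hderu : ∀ s ∈ Set.Ioo (1:ℝ) t₀, HasDerivAt (u x₀) (deriv (u x₀) s) s := by
            intro s hs
            have hsT : s ∈ Set.Ioo (1:ℝ) T := hIoosub hs
            have hmem : Set.Icc (1:ℝ) T ∈ nhds s := Icc_mem_nhds hsT.1 hsT.2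
            exact (((hgreg.differentiableOn one_ne_zero) s
              ⟨hsT.1.le, hsT.2.le⟩).differentiableAt hmem).hasDerivAt
          have hderg : ∀ s ∈ Set.Ioo (1:ℝ) t₀, HasDerivAt g (dg s) s := by
            intro s hs
            have h2 : HasDerivAt (fun y : ℝ => ε * Real.log y) (ε * s⁻¹) s :=
              (Real.hasDerivAt_log (by linarith [hs.1] : s ≠ 0)).const_mul ε
            exact (hderu s hs).sub h2
          have hdWc : ContinuousOn (derivWithin (u x₀) (Set.Icc 1 T)) (Set.Icc 1 T) :=
            hgreg.continuousOn_derivWithin (uniqueDiffOn_Icc hT) le_rfl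
          have hderivc : ContinuousOn (deriv (u x₀)) (Set.Ioo 1 t₀) := by
            apply ContinuousOn.congr (hdWc.mono
              (fun s hs => ⟨(hIoosub hs).1.le, (hIoosub hs).2.le⟩))
            intro s hs
            exact (derivWithin_of_mem_nhds (Icc_mem_nhds (hIoosub hs).1 (hIoosub hs).2)).symm
          have hinvc : ContinuousOn (fun s : ℝ => s⁻¹) (Set.Ioo (1:ℝ) t₀) :=
            continuousOn_inv₀.mono (fun s hs h0 => by
              rw [Set.mem_singleton_iff] at h0; rw [h0] at hs; exact absurd hs.1 (by norm_num))
          have hdgc : ContinuousOn dg (Set.Ioo 1 t₀) :=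
            hderivc.sub (continuousOn_const.mul hinvc)
          obtain ⟨C₀, hC₀⟩ := isCompact_Icc.exists_bound_of_continuousOn hdWc
          have hCb : ∀ s ∈ Set.Ioo (1:ℝ) t₀, |dg s| ≤ C₀ + ε := by
            intro s hs
            have h1 : |deriv (u x₀) s| ≤ C₀ := by
              have h2 := hC₀ s (hIccsub ⟨hs.1.le, hs.2.le⟩)
              rwa [derivWithin_of_mem_nhds (Icc_mem_nhds (hIoosub hs).1 (hIoosub hs).2),
                Real.norm_eq_abs] at h2
            have h2 : |ε * s⁻¹| ≤ ε := by
              rw [abs_mul, abs_of_pos hε, abs_inv,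
                abs_of_pos (lt_trans one_pos hs.1)]
              have h3 : s⁻¹ ≤ 1 := by
                rw [inv_le_one_iff₀]; right; linarith [hs.1]
              nlinarith
            calc |dg s| ≤ |deriv (u x₀) s| + |ε * s⁻¹| := by
                  rw [hdg]; exact abs_sub _ _
              _ ≤ C₀ + ε := add_le_add h1 h2
          have hmaxg : ∀ s ∈ Set.Icc (1:ℝ) t₀, g s ≤ g t₀ := by
            intro s hs
            have hmem : ((x₀, s) : (Fin n → ℝ) × ℝ) ∈ closure G ×ˢ Set.Icc (1:ℝ) T :=
              ⟨hx₀cl, hs.1, le_trans hs.2 ht₀T⟩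
            exact hp₀max hmem
          have hcap := caputo_nonneg hα0 hα1 ht₀1 hcontg hderg hdgc hCb hmaxg
          have hkpos := kernel_int_pos (α := α) hα0 hα1 ht₀1
          have hIdg : IntervalIntegrable (fun s => (Real.log (t₀/s))^(-α) * dg s) volume 1 t₀ :=
            (intervalIntegrable_iff_integrableOn_Ioo_of_le ht₀1.le).mpr
              (integrableOn_kernel_mul hα0 hα1 ht₀1 hdgc hCb)
          have hIinv : IntervalIntegrable (fun s => (Real.log (t₀/s))^(-α) * s⁻¹) volume 1 t₀ :=
            (intervalIntegrable_iff_integrableOn_Ioo_of_le ht₀1.le).mpr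
              (integrableOn_kernel_mul hα0 hα1 ht₀1 (C := 1) hinvc (fun s hs => by
                rw [abs_inv, abs_of_pos (lt_trans one_pos hs.1), inv_le_one_iff₀]
                right; linarith [hs.1]))
          have hsplit : (∫ s in (1:ℝ)..t₀, (Real.log (t₀/s))^(-α) * deriv (u x₀) s)
              = (∫ s in (1:ℝ)..t₀, (Real.log (t₀/s))^(-α) * dg s)
                + ε * ∫ s in (1:ℝ)..t₀, (Real.log (t₀/s))^(-α) * s⁻¹ := by
            rw [← intervalIntegral.integral_const_mul,
              ← intervalIntegral.integral_add hIdg (hIinv.const_mul ε)]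
            apply intervalIntegral.integral_congr
            intro s _
            simp only [hdg]
            ring
          have hcappos : 0 < caputoHadamardT α u x₀ t₀ := by
            rw [caputoHadamardT]
            apply mul_pos
            · rw [one_div]
              exact inv_pos.2 (Real.Gamma_pos_of_pos (by linarith))
            · rw [hsplit]
              nlinarith
          have heq0 := heq x₀ hx₀G t₀ ht₀Ioc
          have hνlap : ν * laplacianX u x₀ t₀ ≤ 0 := mul_nonpos_of_nonneg_of_nonpos hν.le hlap
          linarith
    intro x hx t ht
    have h1 : v (x, t) ≤ v (x₀, t₀) := hp₀max ⟨hx, ht⟩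
    exact le_trans h1 hvM
  -- conclusion
  intro x hx t ht
  have hlogT : 0 < Real.log T := Real.log_pos hT
  by_contra hcon
  push_neg at hcon
  set δ := u x t - M with hδdef
  have hδ : 0 < δ := by rw [hδdef]; linarith
  have hε : 0 < δ / (2 * Real.log T) := by positivity
  have h1 := key _ hε x hx t ht
  have h2 : Real.log t ≤ Real.log T := Real.log_le_log (by linarith [ht.1]) ht.2
  have h3 : Real.log t ≥ 0 := Real.log_nonneg ht.1
  have h4 : δ / (2 * Real.log T) * Real.log t ≤ δ / 2 := by
    rw [div_mul_eq_mul_div, div_le_div_iff₀ (by positivity) (by norm_num)]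
    nlinarith
  rw [hM] at h1
  linarith
end

section
/- Let F(x,t,u) be continuous and nonincreasing in u. Then the nonlinear equation D_{*,t}^α u = ν Δₓ u + F(x,t,u) in Ω = G × (1,T], with initial condition u(x,1) = φ(x) and boundary condition u|_{∂G×[1,T]} = ψ(x,t), admits at most one solution u ∈ C²(Ḡ) ∩ H¹((1,T]) (classical in the stated sense). -/
open Real MeasureTheory Set

/-- `u` is a classical solution of the nonlinear Caputo–Hadamard time-fractional
diffusion problem with nonlinearity `F`, initial data `φ` and boundary data `ψ`. -/
def IsSolutionNonlinearCH {n : ℕ} (G : Set (Fin n → ℝ)) (T ν α : ℝ)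
    (u : (Fin n → ℝ) → ℝ → ℝ) (F : (Fin n → ℝ) → ℝ → ℝ → ℝ)
    (φ : (Fin n → ℝ) → ℝ) (ψ : (Fin n → ℝ) → ℝ → ℝ) : Prop :=
  ContinuousOn (fun p : (Fin n → ℝ) × ℝ => u p.1 p.2) (closure G ×ˢ Set.Icc 1 T) ∧
  (∀ x ∈ G, ContDiffOn ℝ 1 (u x) (Set.Icc 1 T)) ∧
  (∀ t ∈ Set.Ioc (1:ℝ) T, ContDiffOn ℝ 2 (fun x => u x t) G) ∧
  (∀ x ∈ G, ∀ t ∈ Set.Ioc (1:ℝ) T,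
      caputoHadamardT α u x t = ν * laplacianX u x t + F x t (u x t)) ∧
  (∀ x ∈ closure G, u x 1 = φ x) ∧
  (∀ x ∈ frontier G, ∀ t ∈ Set.Icc (1:ℝ) T, u x t = ψ x t)

open Filter Topology intervalIntegral


lemma aux_second_deriv_nonpos {h : ℝ → ℝ} {U : Set ℝ} {a : ℝ}
    (hU : IsOpen U) (ha : a ∈ U) (hh : ContDiffOn ℝ 2 h U)
    (hmax : IsLocalMax h a) : deriv (deriv h) a ≤ 0 := by
  by_contra hc
  push_neg at hc
  -- deriv h is C¹ on U
  have hd1 : ContDiffOn ℝ 1 (deriv h) U := hh.deriv_of_isOpen hU (by norm_num)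
  have hda : HasDerivAt (deriv h) (deriv (deriv h) a) a :=
    ((hd1.differentiableOn one_ne_zero).differentiableAt (hU.mem_nhds ha)).hasDerivAt
  have hz : deriv h a = 0 := hmax.deriv_eq_zero
  -- slope of deriv h tends to deriv (deriv h) a > 0
  have hslope : Tendsto (slope (deriv h) a) (𝓝[>] a) (𝓝 (deriv (deriv h) a)) :=
    (hasDerivAt_iff_tendsto_slope.1 hda).mono_left (nhdsWithin_mono _ fun x hx => ne_of_gt hx)
  have hev : ∀ᶠ z in 𝓝[>] a, 0 < deriv h z := by
    filter_upwards [hslope.eventually (eventually_gt_nhds hc), self_mem_nhdsWithin] with z hz1 hz2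
    have : slope (deriv h) a z = deriv h z / (z - a) := by
      simp [slope, hz, vsub_eq_sub, div_eq_inv_mul]
    rw [this] at hz1
    have hza : 0 < z - a := sub_pos.2 hz2
    have := mul_pos hz1 hza
    rwa [div_mul_cancel₀] at this
    exact ne_of_gt hza
  obtain ⟨u, hu, hIoc⟩ := mem_nhdsGT_iff_exists_Ioc_subset.1 hev
  obtain ⟨r, hr, hball⟩ := Metric.isOpen_iff.1 hU a ha
  obtain ⟨r2, hr2, hmaxball⟩ := Metric.eventually_nhds_iff_ball.1 hmax
  set b := min u (a + min r r2 / 2) with hb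
  have hrr : 0 < min r r2 := lt_min hr hr2
  have hab : a < b := lt_min hu (by linarith)
  have hsub : Icc a b ⊆ Metric.ball a r ∩ Metric.ball a r2 := by
    intro z hz
    have h1 : |z - a| < min r r2 := by
      rw [abs_of_nonneg (sub_nonneg.2 hz.1)]
      have := hz.2.trans (min_le_right u _)
      have hmin : 0 < min r r2 := lt_min hr hr2
      linarith [min_le_left r r2, min_le_right r r2]
    constructor <;> [skip; skip] <;>
      · rw [Metric.mem_ball, Real.dist_eq]
        exact h1.trans_le (by simp [le_refl, min_le_left, min_le_right])
  have hUIcc : Icc a b ⊆ U := fun z hz => hball ((hsub hz).1)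
  have hcont : ContinuousOn h (Icc a b) :=
    (hh.continuousOn).mono hUIcc
  have hmono : StrictMonoOn h (Icc a b) := by
    apply strictMonoOn_of_deriv_pos (convex_Icc a b) hcont
    intro z hz
    rw [interior_Icc] at hz
    exact hIoc ⟨hz.1, hz.2.le.trans (min_le_left _ _)⟩
  have h1 : h a < h b := hmono (left_mem_Icc.2 hab.le) (right_mem_Icc.2 hab.le) hab
  have h2 : h b ≤ h a := hmaxball _ ((hsub (right_mem_Icc.2 hab.le)).2)
  linarith


lemma aux_log_lb {t₀ s : ℝ} (hs : 0 < s) (hst : s ≤ t₀) :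
    (t₀ - s) / t₀ ≤ Real.log (t₀ / s) := by
  have ht₀ : 0 < t₀ := lt_of_lt_of_le hs hst
  have h1 : Real.log (s / t₀) ≤ s / t₀ - 1 := Real.log_le_sub_one_of_pos (by positivity)
  have h2 : Real.log (t₀ / s) = - Real.log (s / t₀) := by
    rw [← Real.log_inv]; congr 1; field_simp
  rw [h2]
  have : (t₀ - s) / t₀ = 1 - s / t₀ := by field_simp
  rw [this]; linarith

lemma aux_weight_le {t₀ α : ℝ} (ht₀ : 1 < t₀) (hα0 : 0 < α) {s : ℝ}
    (hs : 0 < s) (hst : s ≤ t₀) :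
    Real.log (t₀ / s) ^ (-α) ≤ t₀ ^ α * (t₀ - s) ^ (-α) := by
  rcases eq_or_lt_of_le hst with rfl | hlt
  · rw [div_self (by linarith : s ≠ 0), Real.log_one,
      Real.zero_rpow (neg_ne_zero.2 (ne_of_gt hα0)), sub_self,
      Real.zero_rpow (neg_ne_zero.2 (ne_of_gt hα0)), mul_zero]
  · have ht₀' : 0 < t₀ := by linarith
    have hts : 0 < t₀ - s := by linarith
    have hpos : 0 < (t₀ - s) / t₀ := by positivity
    have h1 : Real.log (t₀ / s) ^ (-α) ≤ ((t₀ - s) / t₀) ^ (-α) :=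
      Real.rpow_le_rpow_of_nonpos hpos (aux_log_lb hs hst) (by linarith)
    have h2 : ((t₀ - s) / t₀) ^ (-α) = (t₀ - s) ^ (-α) / t₀ ^ (-α) :=
      Real.div_rpow (by linarith) (le_of_lt ht₀') _
    rw [h2, Real.rpow_neg (le_of_lt ht₀'), div_inv_eq_mul] at h1
    calc Real.log (t₀ / s) ^ (-α) ≤ (t₀ - s) ^ (-α) * t₀ ^ α := h1
    _ = t₀ ^ α * (t₀ - s) ^ (-α) := mul_comm _ _

lemma aux_weight_integrable {t₀ α : ℝ} (ht₀ : 1 < t₀) (hα0 : 0 < α) (hα1 : α < 1) :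
    IntervalIntegrable (fun s => Real.log (t₀ / s) ^ (-α)) volume 1 t₀ := by
  have hbd : IntervalIntegrable (fun s => t₀ ^ α * (t₀ - s) ^ (-α)) volume 1 t₀ := by
    have h0 : IntervalIntegrable (fun x : ℝ => x ^ (-α)) volume (t₀ - 1) (t₀ - t₀) :=
      intervalIntegral.intervalIntegrable_rpow' (by linarith)
    have := (h0.comp_sub_left t₀)
    simp only [sub_sub_cancel] at this
    exact this.const_mul _
  apply hbd.mono_fun
  · apply Measurable.aestronglyMeasurable
    exact (Real.measurable_log.comp (measurable_const.div measurable_id)).pow_const _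
  · have huIoc : Set.uIoc (1:ℝ) t₀ = Ioc 1 t₀ := uIoc_of_le (le_of_lt ht₀)
    rw [huIoc]
    filter_upwards [ae_restrict_mem measurableSet_Ioc] with s hs
    have h1 : (0:ℝ) < s := lt_trans zero_lt_one hs.1
    have hlog : 0 ≤ Real.log (t₀ / s) := by
      apply Real.log_nonneg
      rw [le_div_iff₀ h1]; linarith [hs.2]
    have hf : 0 ≤ Real.log (t₀ / s) ^ (-α) := Real.rpow_nonneg hlog _
    have hg : 0 ≤ t₀ ^ α * (t₀ - s) ^ (-α) := by
      apply mul_nonneg (Real.rpow_nonneg (by linarith) _)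
        (Real.rpow_nonneg (by linarith [hs.2]) _)
    simp only [Real.norm_eq_abs, abs_of_nonneg hf, abs_of_nonneg hg]
    exact aux_weight_le ht₀ hα0 h1 hs.2


lemma aux_caputo_lb {T t₀ α : ℝ} (ht₀1 : 1 < t₀) (ht₀T : t₀ ≤ T)
    (hα0 : 0 < α) (hα1 : α < 1)
    {w w' : ℝ → ℝ} (hw : ContDiffOn ℝ 1 w (Set.Icc 1 T))
    (hw' : ∀ s ∈ Set.Ioo 1 T, HasDerivAt w (w' s) s)
    (hw'int : IntervalIntegrable w' volume 1 t₀)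
    (hint : IntervalIntegrable (fun s => Real.log (t₀ / s) ^ (-α) * w' s) volume 1 t₀)
    (hw1 : w 1 = 0) (hmax : ∀ s ∈ Set.Icc 1 t₀, w s ≤ w t₀) :
    Real.log t₀ ^ (-α) * w t₀ ≤ ∫ s in (1:ℝ)..t₀, Real.log (t₀ / s) ^ (-α) * w' s := by
  have hT : (1:ℝ) < T := lt_of_lt_of_le ht₀1 ht₀T
  set g : ℝ → ℝ := fun s => Real.log (t₀ / s) ^ (-α) with hg_def
  set g' : ℝ → ℝ := fun s => α * Real.log (t₀ / s) ^ (-α - 1) * s⁻¹ with hg'_def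
  set M : ℝ := w t₀ with hM_def
  -- derivative of the weight
  have hlogpos : ∀ x ∈ Set.Ico (1:ℝ) t₀, 0 < Real.log (t₀ / x) := by
    intro x hx
    have hx0 : (0:ℝ) < x := lt_of_lt_of_le zero_lt_one hx.1
    exact Real.log_pos ((one_lt_div hx0).2 hx.2)
  have hgderiv : ∀ x ∈ Set.Ico (1:ℝ) t₀, HasDerivAt g (g' x) x := by
    intro x hx
    have hx0 : (0:ℝ) < x := lt_of_lt_of_le zero_lt_one hx.1
    have hlog : 0 < Real.log (t₀ / x) := hlogpos x hx
    have h1 : HasDerivAt Real.log x⁻¹ x := Real.hasDerivAt_log (ne_of_gt hx0)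
    have h2 : HasDerivAt (fun s => Real.log t₀ - Real.log s) (-x⁻¹) x := h1.const_sub _
    have heq : (fun s => Real.log (t₀ / s)) =ᶠ[𝓝 x] fun s => Real.log t₀ - Real.log s := by
      filter_upwards [Ioi_mem_nhds hx0] with s hs
      rw [Real.log_div (by positivity) (ne_of_gt hs)]
    have h3 : HasDerivAt (fun s => Real.log (t₀ / s)) (-x⁻¹) x := h2.congr_of_eventuallyEq heq
    have h4 : HasDerivAt (fun y : ℝ => y ^ (-α)) (-α * Real.log (t₀ / x) ^ (-α - 1))
        (Real.log (t₀ / x)) := Real.hasDerivAt_rpow_const (Or.inl (ne_of_gt hlog))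
    have h5 : HasDerivAt g (-α * Real.log (t₀ / x) ^ (-α - 1) * -x⁻¹) x := by
      have h := h4.comp x h3; exact h
    convert h5 using 1
    simp only [hg'_def]
    ring
  have hg'nonneg : ∀ x ∈ Set.Ico (1:ℝ) t₀, 0 ≤ g' x := by
    intro x hx
    have hx0 : (0:ℝ) < x := lt_of_lt_of_le zero_lt_one hx.1
    have hlog : 0 < Real.log (t₀ / x) := hlogpos x hx
    exact mul_nonneg (mul_nonneg hα0.le (Real.rpow_nonneg hlog.le _)) (by positivity)
  have hg'cont : ∀ x ∈ Set.Ico (1:ℝ) t₀, ContinuousAt g' x := by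
    intro x hx
    have hx0 : (0:ℝ) < x := lt_of_lt_of_le zero_lt_one hx.1
    have hlog : 0 < Real.log (t₀ / x) := hlogpos x hx
    have hc1 : ContinuousAt (fun s => Real.log (t₀ / s)) x :=
      (Real.continuousAt_log (by positivity)).comp
        (continuousAt_const.div continuousAt_id (ne_of_gt hx0))
    exact (continuousAt_const.mul (hc1.rpow_const (Or.inl (ne_of_gt hlog)))).mul
      (continuousAt_id.inv₀ (ne_of_gt hx0))
  -- the key inequality for τ < t₀
  have key : ∀ τ ∈ Set.Ioo (1:ℝ) t₀,
      g τ * (w τ - M) + Real.log t₀ ^ (-α) * M ≤ ∫ s in (1:ℝ)..τ, g s * w' s := by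
    intro τ hτ
    have hτ1 : (1:ℝ) ≤ τ := hτ.1.le
    have hIcc : Set.uIcc (1:ℝ) τ = Set.Icc 1 τ := uIcc_of_le hτ1
    have hsubIco : Set.Icc (1:ℝ) τ ⊆ Set.Ico 1 t₀ := fun x hx => ⟨hx.1, lt_of_le_of_lt hx.2 hτ.2⟩
    have hgc : ContinuousOn g (Set.Icc 1 τ) := fun x hx =>
      ((hgderiv x (hsubIco hx)).continuousAt).continuousWithinAt
    have hg'c : ContinuousOn g' (Set.Icc 1 τ) := fun x hx =>
      (hg'cont x (hsubIco hx)).continuousWithinAt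
    have hwc : ContinuousOn w (Set.Icc 1 τ) :=
      hw.continuousOn.mono (Set.Icc_subset_Icc le_rfl (by linarith [hτ.2]))
    have hg'int : IntervalIntegrable g' volume 1 τ := by
      rw [intervalIntegrable_iff_integrableOn_Icc_of_le hτ1]
      exact hg'c.integrableOn_compact isCompact_Icc
    have hw'int' : IntervalIntegrable w' volume 1 τ :=
      hw'int.mono_set' (by rw [uIoc_of_le hτ1, uIoc_of_le ht₀1.le]
                           exact Set.Ioc_subset_Ioc le_rfl hτ.2.le)
    have hparts := intervalIntegral.integral_mul_deriv_eq_deriv_mul_of_hasDerivAt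
      (a := 1) (b := τ) (u := g) (v := w) (u' := g') (v' := w')
      (by rw [uIcc_of_le hτ1]; exact hgc)
      (by rw [uIcc_of_le hτ1]; exact hwc)
      (by rw [min_eq_left hτ1, max_eq_right hτ1]
          exact fun x hx => hgderiv x ⟨hx.1.le, hx.2.trans hτ.2⟩)
      (by rw [min_eq_left hτ1, max_eq_right hτ1]
          exact fun x hx => hw' x ⟨hx.1, lt_of_lt_of_le (hx.2.trans hτ.2) ht₀T⟩)
      hg'int hw'int'
    -- bound the boundary integral
    have hmono : ∫ x in (1:ℝ)..τ, g' x * w x ≤ ∫ x in (1:ℝ)..τ, g' x * M := by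
      apply intervalIntegral.integral_mono_on hτ1
      · rw [intervalIntegrable_iff_integrableOn_Icc_of_le hτ1]
        exact (hg'c.mul hwc).integrableOn_compact isCompact_Icc
      · rw [intervalIntegrable_iff_integrableOn_Icc_of_le hτ1]
        exact (hg'c.mul continuousOn_const).integrableOn_compact isCompact_Icc
      · intro x hx
        exact mul_le_mul_of_nonneg_left
          (hmax x ⟨hx.1, hx.2.trans hτ.2.le⟩) (hg'nonneg x (hsubIco hx))
    have hftc : ∫ x in (1:ℝ)..τ, g' x = g τ - g 1 :=
      intervalIntegral.integral_eq_sub_of_hasDerivAt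
        (by rw [uIcc_of_le hτ1]; exact fun x hx => hgderiv x (hsubIco hx)) hg'int
    have hg1 : g 1 = Real.log t₀ ^ (-α) := by simp [hg_def]
    have hMconst : ∫ x in (1:ℝ)..τ, g' x * M = (g τ - g 1) * M := by
      rw [intervalIntegral.integral_mul_const, hftc]
    rw [hparts, hw1, hg1]
    have := hmono.trans_eq hMconst
    rw [hg1] at this
    linarith
  -- pass to the limit τ → t₀⁻
  have hIooIcc : Set.Ioo (1:ℝ) t₀ ⊆ Set.uIcc 1 t₀ := by
    rw [uIcc_of_le ht₀1.le]; exact Set.Ioo_subset_Icc_self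
  have hne : (𝓝[Set.Ioo (1:ℝ) t₀] t₀).NeBot := by
    apply mem_closure_iff_nhdsWithin_neBot.1
    rw [closure_Ioo (ne_of_lt ht₀1)]
    exact ⟨ht₀1.le, le_rfl⟩
  have h1 : Tendsto (fun τ => ∫ s in (1:ℝ)..τ, g s * w' s) (𝓝[Set.Ioo (1:ℝ) t₀] t₀)
      (𝓝 (∫ s in (1:ℝ)..t₀, g s * w' s)) := by
    have hcontF := intervalIntegral.continuousOn_primitive_interval' hint left_mem_uIcc
    exact (hcontF t₀ right_mem_uIcc).mono_left (nhdsWithin_mono _ hIooIcc)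
  -- Lipschitz bound
  obtain ⟨C, hC⟩ := isCompact_Icc.exists_bound_of_continuousOn
    (hw.continuousOn_derivWithin (uniqueDiffOn_Icc hT) le_rfl)
  have hC0 : 0 ≤ C := le_trans (norm_nonneg _) (hC 1 ⟨le_rfl, hT.le⟩)
  have hlip : ∀ τ ∈ Set.Icc (1:ℝ) T, |w τ - w t₀| ≤ C * |τ - t₀| := by
    intro τ hτmem
    exact Convex.norm_image_sub_le_of_norm_derivWithin_le (hw.differentiableOn one_ne_zero) hC
      (convex_Icc _ _) ⟨ht₀1.le, ht₀T⟩ hτmem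
  have h2 : Tendsto (fun τ => g τ * (w τ - M)) (𝓝[Set.Ioo (1:ℝ) t₀] t₀) (𝓝 0) := by
    apply squeeze_zero_norm' (a := fun τ => (t₀ ^ α * C) * (t₀ - τ) ^ (1 - α))
    · filter_upwards [self_mem_nhdsWithin] with τ hτ
      have hτ0 : (0:ℝ) < τ := lt_trans zero_lt_one hτ.1
      have hts : 0 < t₀ - τ := sub_pos.2 hτ.2
      have hgle : g τ ≤ t₀ ^ α * (t₀ - τ) ^ (-α) := aux_weight_le ht₀1 hα0 hτ0 hτ.2.le
      have hgnn : 0 ≤ g τ := Real.rpow_nonneg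
        (Real.log_nonneg ((one_le_div hτ0).2 hτ.2.le)) _
      have hwle : |w τ - M| ≤ C * (t₀ - τ) := by
        have h' := hlip τ ⟨hτ.1.le, hτ.2.le.trans ht₀T⟩
        have h'' : |τ - t₀| = t₀ - τ := by
          rw [abs_sub_comm, abs_of_nonneg (by linarith)]
        rwa [h''] at h'
      have : ‖g τ * (w τ - M)‖ = g τ * |w τ - M| := by
        rw [Real.norm_eq_abs, abs_mul, abs_of_nonneg hgnn]
      rw [this]
      calc g τ * |w τ - M| ≤ (t₀ ^ α * (t₀ - τ) ^ (-α)) * (C * (t₀ - τ)) :=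
            mul_le_mul hgle hwle (abs_nonneg _)
              (by positivity)
        _ = (t₀ ^ α * C) * ((t₀ - τ) ^ (-α) * (t₀ - τ) ^ (1:ℝ)) := by
            rw [Real.rpow_one]; ring
        _ = (t₀ ^ α * C) * (t₀ - τ) ^ (1 - α) := by
            rw [← Real.rpow_add hts]; ring_nf
    · have hsub : Tendsto (fun τ : ℝ => t₀ - τ) (𝓝[Set.Ioo (1:ℝ) t₀] t₀) (𝓝 0) := by
        have : Tendsto (fun τ : ℝ => t₀ - τ) (𝓝 t₀) (𝓝 (t₀ - t₀)) :=
          tendsto_const_nhds.sub tendsto_id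
        rw [sub_self] at this
        exact this.mono_left nhdsWithin_le_nhds
      have hrpow : ContinuousAt (fun y : ℝ => y ^ (1 - α)) 0 :=
        Real.continuousAt_rpow_const 0 (1 - α) (Or.inr (by linarith))
      have h0 : (0:ℝ) ^ (1 - α) = 0 := Real.zero_rpow (by linarith)
      have := (hrpow.tendsto.comp hsub).const_mul (t₀ ^ α * C)
      rw [h0, mul_zero] at this
      exact this
  have h3 : Tendsto (fun τ => g τ * (w τ - M) + Real.log t₀ ^ (-α) * M)
      (𝓝[Set.Ioo (1:ℝ) t₀] t₀) (𝓝 (0 + Real.log t₀ ^ (-α) * M)) :=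
    h2.add tendsto_const_nhds
  have hfinal := le_of_tendsto_of_tendsto h3 h1
    (by filter_upwards [self_mem_nhdsWithin] with τ hτ; exact key τ hτ)
  rwa [zero_add] at hfinal


lemma aux_update_contDiff {n : ℕ} (x₀ : Fin n → ℝ) (j : Fin n) :
    ContDiff ℝ 2 (fun z : ℝ => Function.update x₀ j z) := by
  apply contDiff_pi.2
  intro i
  by_cases h : i = j
  · subst h
    simp only [Function.update_self]
    exact contDiff_id
  · simp only [Function.update_of_ne h]
    exact contDiff_const

lemma aux_main_le {n : ℕ} (G : Set (Fin n → ℝ)) (hGopen : IsOpen G)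
    (hGbdd : Bornology.IsBounded G)
    (T ν α : ℝ) (hT : 1 < T) (hν : 0 < ν) (hα0 : 0 < α) (hα1 : α < 1)
    (F : (Fin n → ℝ) → ℝ → ℝ → ℝ)
    (hFmono : ∀ x t, ∀ v w : ℝ, v ≤ w → F x t w ≤ F x t v)
    (φ : (Fin n → ℝ) → ℝ) (ψ : (Fin n → ℝ) → ℝ → ℝ)
    (u₁ u₂ : (Fin n → ℝ) → ℝ → ℝ)
    (h₁ : IsSolutionNonlinearCH G T ν α u₁ F φ ψ)
    (h₂ : IsSolutionNonlinearCH G T ν α u₂ F φ ψ) :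
    ∀ x ∈ closure G, ∀ t ∈ Set.Icc (1:ℝ) T, u₁ x t ≤ u₂ x t := by
  obtain ⟨h₁c, h₁t, h₁x, h₁eq, h₁init, h₁bdry⟩ := h₁
  obtain ⟨h₂c, h₂t, h₂x, h₂eq, h₂init, h₂bdry⟩ := h₂
  intro x hx t ht
  by_contra hcon
  push_neg at hcon
  -- the difference and its max on the compact cylinder
  set W : ((Fin n → ℝ) × ℝ) → ℝ := fun p => u₁ p.1 p.2 - u₂ p.1 p.2 with hW_def
  set K : Set ((Fin n → ℝ) × ℝ) := closure G ×ˢ Set.Icc 1 T with hK_def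
  have hKc : IsCompact K :=
    (hGbdd.isCompact_closure).prod isCompact_Icc
  have hWc : ContinuousOn W K := h₁c.sub h₂c
  have hxtK : (x, t) ∈ K := ⟨hx, ht⟩
  obtain ⟨p₀, hp₀K, hp₀max⟩ := hKc.exists_isMaxOn ⟨(x, t), hxtK⟩ hWc
  have hmaxK : ∀ p ∈ K, W p ≤ W p₀ := fun p hp => hp₀max hp
  set x₀ : Fin n → ℝ := p₀.1 with hx₀_def
  set t₀ : ℝ := p₀.2 with ht₀_def
  have hx₀cl : x₀ ∈ closure G := hp₀K.1
  have ht₀Icc : t₀ ∈ Set.Icc (1:ℝ) T := hp₀K.2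
  set M : ℝ := W p₀ with hM_def
  have hMpos : 0 < M := lt_of_lt_of_le (sub_pos.2 hcon) (hmaxK (x, t) hxtK)
  -- the max point is interior in space
  have hx₀G : x₀ ∈ G := by
    by_cases hfr : x₀ ∈ frontier G
    · exfalso
      have e₁ : u₁ x₀ t₀ = ψ x₀ t₀ := h₁bdry x₀ hfr t₀ ht₀Icc
      have e₂ : u₂ x₀ t₀ = ψ x₀ t₀ := h₂bdry x₀ hfr t₀ ht₀Icc
      have hM0 : M = 0 := by
        have hM' : M = u₁ x₀ t₀ - u₂ x₀ t₀ := rfl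
        rw [hM', e₁, e₂, sub_self]
      linarith
    · have : x₀ ∈ interior G := by
        by_contra hni
        exact hfr ⟨hx₀cl, hni⟩
      rwa [hGopen.interior_eq] at this
  -- and t₀ > 1
  have ht₀1 : 1 < t₀ := by
    rcases eq_or_lt_of_le ht₀Icc.1 with heq | h
    · exfalso
      have e₁ : u₁ x₀ 1 = φ x₀ := h₁init x₀ hx₀cl
      have e₂ : u₂ x₀ 1 = φ x₀ := h₂init x₀ hx₀cl
      have hM0 : M = 0 := by
        have hM' : M = u₁ x₀ t₀ - u₂ x₀ t₀ := rfl
        rw [hM', ← heq, e₁, e₂, sub_self]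
      linarith
    · exact h
  have ht₀Ioc : t₀ ∈ Set.Ioc (1:ℝ) T := ⟨ht₀1, ht₀Icc.2⟩
  have ht₀T : t₀ ≤ T := ht₀Icc.2
  -- time regularity of the two solutions at x₀
  have hr₁ : ContDiffOn ℝ 1 (u₁ x₀) (Set.Icc 1 T) := h₁t x₀ hx₀G
  have hr₂ : ContDiffOn ℝ 1 (u₂ x₀) (Set.Icc 1 T) := h₂t x₀ hx₀G
  set w : ℝ → ℝ := fun s => u₁ x₀ s - u₂ x₀ s with hw_def
  set w' : ℝ → ℝ := fun s => deriv (u₁ x₀) s - deriv (u₂ x₀) s with hw'_def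
  have hw : ContDiffOn ℝ 1 w (Set.Icc 1 T) := hr₁.sub hr₂
  have hdiff : ∀ s ∈ Set.Ioo (1:ℝ) T, DifferentiableAt ℝ (u₁ x₀) s ∧
      DifferentiableAt ℝ (u₂ x₀) s := by
    intro s hs
    have hmem : Set.Icc (1:ℝ) T ∈ 𝓝 s := Icc_mem_nhds hs.1 hs.2
    exact ⟨((hr₁.differentiableOn one_ne_zero) s (mem_of_mem_nhds hmem)).differentiableAt hmem,
           ((hr₂.differentiableOn one_ne_zero) s (mem_of_mem_nhds hmem)).differentiableAt hmem⟩
  have hw' : ∀ s ∈ Set.Ioo (1:ℝ) T, HasDerivAt w (w' s) s := by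
    intro s hs
    exact ((hdiff s hs).1.hasDerivAt).sub ((hdiff s hs).2.hasDerivAt)
  -- bound on the derivatives
  obtain ⟨C₁, hC₁⟩ := isCompact_Icc.exists_bound_of_continuousOn
    (hr₁.continuousOn_derivWithin (uniqueDiffOn_Icc hT) le_rfl)
  obtain ⟨C₂, hC₂⟩ := isCompact_Icc.exists_bound_of_continuousOn
    (hr₂.continuousOn_derivWithin (uniqueDiffOn_Icc hT) le_rfl)
  have hC₁0 : 0 ≤ C₁ := le_trans (norm_nonneg _) (hC₁ 1 ⟨le_rfl, hT.le⟩)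
  have hC₂0 : 0 ≤ C₂ := le_trans (norm_nonneg _) (hC₂ 1 ⟨le_rfl, hT.le⟩)
  have hderiv_bd : ∀ s ∈ Set.Ioo (1:ℝ) T,
      |deriv (u₁ x₀) s| ≤ C₁ ∧ |deriv (u₂ x₀) s| ≤ C₂ := by
    intro s hs
    have hmem : Set.Icc (1:ℝ) T ∈ 𝓝 s := Icc_mem_nhds hs.1 hs.2
    have hsIcc : s ∈ Set.Icc (1:ℝ) T := mem_of_mem_nhds hmem
    constructor
    · rw [← derivWithin_of_mem_nhds hmem]; exact hC₁ s hsIcc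
    · rw [← derivWithin_of_mem_nhds hmem]; exact hC₂ s hsIcc
  -- a.e. membership in Ioo 1 T on the interval of integration
  have hae_Ioo : ∀ᵐ s ∂(volume.restrict (Set.uIoc (1:ℝ) t₀)), s ∈ Set.Ioo (1:ℝ) T := by
    have hne : ∀ᵐ (s : ℝ) ∂volume, s ≠ t₀ := by
      rw [ae_iff]
      have : {s : ℝ | ¬s ≠ t₀} = {t₀} := by ext s; simp
      rw [this]
      exact measure_singleton t₀
    filter_upwards [ae_restrict_mem measurableSet_uIoc, ae_restrict_of_ae hne] with s hs hne'
    rw [uIoc_of_le ht₀1.le] at hs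
    exact ⟨hs.1, lt_of_lt_of_le (lt_of_le_of_ne hs.2 hne') ht₀T⟩
  -- integrability of the weighted derivatives
  have hwt_int : IntervalIntegrable (fun s => Real.log (t₀ / s) ^ (-α)) volume 1 t₀ :=
    aux_weight_integrable ht₀1 hα0 hα1
  have hwt_meas : Measurable fun s : ℝ => Real.log (t₀ / s) ^ (-α) :=
    (Real.measurable_log.comp (measurable_const.div measurable_id)).pow_const _
  have hwt_nonneg : ∀ s ∈ Set.Ioc (1:ℝ) t₀, 0 ≤ Real.log (t₀ / s) ^ (-α) := by
    intro s hs
    have hs0 : (0:ℝ) < s := lt_trans zero_lt_one hs.1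
    exact Real.rpow_nonneg (Real.log_nonneg ((one_le_div hs0).2 hs.2)) _
  have hint_gen : ∀ (v : ℝ → ℝ) (C : ℝ), Measurable (deriv v) →
      (∀ᵐ s ∂(volume.restrict (Set.uIoc (1:ℝ) t₀)), |deriv v s| ≤ C) →
      IntervalIntegrable (fun s => Real.log (t₀ / s) ^ (-α) * deriv v s) volume 1 t₀ := by
    intro v C hmeas hbd
    apply (hwt_int.const_mul C).mono_fun
    · exact (hwt_meas.mul hmeas).aestronglyMeasurable
    · filter_upwards [hbd, ae_restrict_mem measurableSet_uIoc] with s hs hs'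
      rw [uIoc_of_le ht₀1.le] at hs'
      have h0 : 0 ≤ Real.log (t₀ / s) ^ (-α) := hwt_nonneg s hs'
      simp only [Real.norm_eq_abs, abs_mul, abs_of_nonneg h0]
      calc Real.log (t₀ / s) ^ (-α) * |deriv v s| ≤ Real.log (t₀ / s) ^ (-α) * C :=
            mul_le_mul_of_nonneg_left hs h0
        _ ≤ Real.log (t₀ / s) ^ (-α) * |C| := mul_le_mul_of_nonneg_left (le_abs_self C) h0
        _ = |C| * Real.log (t₀ / s) ^ (-α) := mul_comm _ _
  have hbd₁ : ∀ᵐ s ∂(volume.restrict (Set.uIoc (1:ℝ) t₀)), |deriv (u₁ x₀) s| ≤ C₁ := by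
    filter_upwards [hae_Ioo] with s hs; exact (hderiv_bd s hs).1
  have hbd₂ : ∀ᵐ s ∂(volume.restrict (Set.uIoc (1:ℝ) t₀)), |deriv (u₂ x₀) s| ≤ C₂ := by
    filter_upwards [hae_Ioo] with s hs; exact (hderiv_bd s hs).2
  have hint₁ := hint_gen (u₁ x₀) C₁ (measurable_deriv _) hbd₁
  have hint₂ := hint_gen (u₂ x₀) C₂ (measurable_deriv _) hbd₂
  have hint : IntervalIntegrable (fun s => Real.log (t₀ / s) ^ (-α) * w' s) volume 1 t₀ := by
    have := hint₁.sub hint₂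
    apply this.congr
    intro s _
    simp only [hw'_def]
    ring
  have hw'int : IntervalIntegrable w' volume 1 t₀ := by
    apply (_root_.intervalIntegrable_const (μ := volume) (a := (1:ℝ)) (b := t₀) (c := C₁ + C₂)).mono_fun
    · exact ((measurable_deriv _).sub (measurable_deriv _)).aestronglyMeasurable
    · filter_upwards [hae_Ioo] with s hs
      simp only [Real.norm_eq_abs, hw'_def]
      calc |deriv (u₁ x₀) s - deriv (u₂ x₀) s| ≤ |deriv (u₁ x₀) s| + |deriv (u₂ x₀) s| :=
            abs_sub (deriv (u₁ x₀) s) (deriv (u₂ x₀) s)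
        _ ≤ C₁ + C₂ := add_le_add (hderiv_bd s hs).1 (hderiv_bd s hs).2
        _ ≤ |C₁ + C₂| := le_abs_self _
  -- w attains its max over [1, t₀] at t₀, and w 1 = 0
  have hw1 : w 1 = 0 := by
    simp only [hw_def, h₁init x₀ hx₀cl, h₂init x₀ hx₀cl, sub_self]
  have hwmax : ∀ s ∈ Set.Icc (1:ℝ) t₀, w s ≤ w t₀ := by
    intro s hs
    have : (x₀, s) ∈ K := ⟨hx₀cl, ⟨hs.1, hs.2.trans ht₀T⟩⟩
    exact hmaxK (x₀, s) this
  -- lower bound for the difference of Caputo-Hadamard derivatives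
  have hkey := aux_caputo_lb ht₀1 ht₀T hα0 hα1 hw hw' hw'int hint hw1 hwmax
  have hwt₀ : w t₀ = M := rfl
  -- the difference of the equations
  have heq₁ := h₁eq x₀ hx₀G t₀ ht₀Ioc
  have heq₂ := h₂eq x₀ hx₀G t₀ ht₀Ioc
  have hcap_sub : caputoHadamardT α u₁ x₀ t₀ - caputoHadamardT α u₂ x₀ t₀ =
      (1 / Real.Gamma (1 - α)) * ∫ s in (1:ℝ)..t₀, Real.log (t₀ / s) ^ (-α) * w' s := by
    simp only [caputoHadamardT]
    rw [← mul_sub, ← intervalIntegral.integral_sub hint₁ hint₂]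
    congr 1
    apply intervalIntegral.integral_congr
    intro s _
    simp only [hw'_def]
    ring
  -- positivity of the Gamma factor and of the lower bound
  have hΓ : 0 < Real.Gamma (1 - α) := Real.Gamma_pos_of_pos (by linarith)
  have hlb : 0 < Real.log t₀ ^ (-α) * w t₀ := by
    rw [hwt₀]
    exact mul_pos (Real.rpow_pos_of_pos (Real.log_pos ht₀1) _) hMpos
  have hcap_pos : 0 < caputoHadamardT α u₁ x₀ t₀ - caputoHadamardT α u₂ x₀ t₀ := by
    rw [hcap_sub]
    apply mul_pos (by positivity)
    exact lt_of_lt_of_le hlb hkey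
  -- the nonlinear term is nonpositive
  have hu21 : u₂ x₀ t₀ ≤ u₁ x₀ t₀ := by
    have : 0 < u₁ x₀ t₀ - u₂ x₀ t₀ := hMpos
    linarith
  have hF : F x₀ t₀ (u₁ x₀ t₀) - F x₀ t₀ (u₂ x₀ t₀) ≤ 0 :=
    sub_nonpos.2 (hFmono x₀ t₀ _ _ hu21)
  -- the Laplacian difference is nonpositive
  have hlap : laplacianX u₁ x₀ t₀ - laplacianX u₂ x₀ t₀ ≤ 0 := by
    simp only [laplacianX]
    rw [← Finset.sum_sub_distrib]
    apply Finset.sum_nonpos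
    intro j _
    -- set up the 1-variable slices
    set m : ℝ → (Fin n → ℝ) := fun z => Function.update x₀ j z with hm_def
    have hm : ContDiff ℝ 2 m := aux_update_contDiff x₀ j
    set U : Set ℝ := m ⁻¹' G with hU_def
    have hUopen : IsOpen U := hGopen.preimage hm.continuous
    have hmx₀ : m (x₀ j) = x₀ := Function.update_eq_self j x₀
    have haU : x₀ j ∈ U := by
      simp only [hU_def, Set.mem_preimage, hmx₀]
      exact hx₀G
    set f₁ : ℝ → ℝ := fun z => u₁ (m z) t₀ with hf₁_def
    set f₂ : ℝ → ℝ := fun z => u₂ (m z) t₀ with hf₂_def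
    have hf₁ : ContDiffOn ℝ 2 f₁ U :=
      (h₁x t₀ ht₀Ioc).comp hm.contDiffOn (fun z hz => hz)
    have hf₂ : ContDiffOn ℝ 2 f₂ U :=
      (h₂x t₀ ht₀Ioc).comp hm.contDiffOn (fun z hz => hz)
    set h : ℝ → ℝ := fun z => f₁ z - f₂ z with hh_def
    have hhC : ContDiffOn ℝ 2 h U := hf₁.sub hf₂
    have hlocmax : IsLocalMax h (x₀ j) := by
      filter_upwards [hUopen.mem_nhds haU] with z hz
      have hzK : (m z, t₀) ∈ K := ⟨subset_closure hz, ht₀Icc⟩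
      have := hmaxK (m z, t₀) hzK
      simp only [hh_def, hf₁_def, hf₂_def]
      calc u₁ (m z) t₀ - u₂ (m z) t₀ ≤ M := this
        _ = u₁ (m (x₀ j)) t₀ - u₂ (m (x₀ j)) t₀ := by rw [hmx₀]
    have hdd : deriv (deriv h) (x₀ j) ≤ 0 :=
      aux_second_deriv_nonpos hUopen haU hhC hlocmax
    -- identify iterated derivatives
    have hdiff₁ : ∀ z ∈ U, DifferentiableAt ℝ f₁ z := fun z hz =>
      ((hf₁.differentiableOn (by norm_num)) z hz).differentiableAt (hUopen.mem_nhds hz)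
    have hdiff₂ : ∀ z ∈ U, DifferentiableAt ℝ f₂ z := fun z hz =>
      ((hf₂.differentiableOn (by norm_num)) z hz).differentiableAt (hUopen.mem_nhds hz)
    have hder_eq : deriv h =ᶠ[𝓝 (x₀ j)] fun z => deriv f₁ z - deriv f₂ z := by
      filter_upwards [hUopen.mem_nhds haU] with z hz
      exact deriv_sub (hdiff₁ z hz) (hdiff₂ z hz)
    have hd₁ : ContDiffOn ℝ 1 (deriv f₁) U := hf₁.deriv_of_isOpen hUopen (by norm_num)
    have hd₂ : ContDiffOn ℝ 1 (deriv f₂) U := hf₂.deriv_of_isOpen hUopen (by norm_num)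
    have hdd₁ : DifferentiableAt ℝ (deriv f₁) (x₀ j) :=
      ((hd₁.differentiableOn one_ne_zero) _ haU).differentiableAt (hUopen.mem_nhds haU)
    have hdd₂ : DifferentiableAt ℝ (deriv f₂) (x₀ j) :=
      ((hd₂.differentiableOn one_ne_zero) _ haU).differentiableAt (hUopen.mem_nhds haU)
    have hsplit : deriv (deriv h) (x₀ j) =
        deriv (deriv f₁) (x₀ j) - deriv (deriv f₂) (x₀ j) := by
      rw [hder_eq.deriv_eq]
      exact deriv_sub hdd₁ hdd₂
    have hit : ∀ (f : ℝ → ℝ), iteratedDeriv 2 f = deriv (deriv f) := by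
      intro f
      rw [iteratedDeriv_succ, iteratedDeriv_one]
    calc iteratedDeriv 2 (fun z => u₁ (Function.update x₀ j z) t₀) (x₀ j) -
          iteratedDeriv 2 (fun z => u₂ (Function.update x₀ j z) t₀) (x₀ j)
        = deriv (deriv f₁) (x₀ j) - deriv (deriv f₂) (x₀ j) := by rw [hit, hit]
      _ = deriv (deriv h) (x₀ j) := hsplit.symm
      _ ≤ 0 := hdd
  -- contradiction
  have hνlap : ν * laplacianX u₁ x₀ t₀ - ν * laplacianX u₂ x₀ t₀ ≤ 0 := by
    have := mul_nonpos_of_nonneg_of_nonpos hν.le hlap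
    linarith [this, mul_sub ν (laplacianX u₁ x₀ t₀) (laplacianX u₂ x₀ t₀)]
  rw [heq₁, heq₂] at hcap_pos
  linarith

theorem uniqueness_nonlinear_caputoHadamard_diffusion
    {n : ℕ} (G : Set (Fin n → ℝ)) (hGopen : IsOpen G) (hGne : G.Nonempty)
    (hGbdd : Bornology.IsBounded G)
    (T ν α : ℝ) (hT : 1 < T) (hν : 0 < ν) (hα0 : 0 < α) (hα1 : α < 1)
    (F : (Fin n → ℝ) → ℝ → ℝ → ℝ)
    (hFc : Continuous fun p : (Fin n → ℝ) × ℝ × ℝ => F p.1 p.2.1 p.2.2)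
    (hFsmooth : ∀ x t, ContDiff ℝ 1 (F x t))
    (hFmono : ∀ x t, ∀ v w : ℝ, v ≤ w → F x t w ≤ F x t v)
    (φ : (Fin n → ℝ) → ℝ) (ψ : (Fin n → ℝ) → ℝ → ℝ)
    (u₁ u₂ : (Fin n → ℝ) → ℝ → ℝ)
    (h₁ : IsSolutionNonlinearCH G T ν α u₁ F φ ψ)
    (h₂ : IsSolutionNonlinearCH G T ν α u₂ F φ ψ) :
    ∀ x ∈ closure G, ∀ t ∈ Set.Icc (1:ℝ) T, u₁ x t = u₂ x t := by
  intro x hx t ht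
  exact le_antisymm
    (aux_main_le G hGopen hGbdd T ν α hT hν hα0 hα1 F hFmono φ ψ u₁ u₂ h₁ h₂ x hx t ht)
    (aux_main_le G hGopen hGbdd T ν α hT hν hα0 hα1 F hFmono φ ψ u₂ u₁ h₂ h₁ x hx t ht)
end

section
/- Let u₁, u₂ solve D_{*,t}^α u = ν Δₓ u + F(x,t,u) in Ω = G × (1,T] with the same boundary condition and initial data g₁(x), g₂(x) respectively, where F is C¹ and nonincreasing in u. Then ‖u₁ − u₂‖_{C(closure of Ω)} ≤ ‖g₁ − g₂‖_{C(Ḡ)}. -/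
open Real MeasureTheory Set

section CHproofAux
open intervalIntegral Filter


namespace CHaux

variable {α t₀ T : ℝ}

lemma log_lower {s : ℝ} (hs1 : 0 < s) (hst : s ≤ t₀) : (t₀ - s) / t₀ ≤ Real.log (t₀ / s) := by
  have ht₀ : 0 < t₀ := lt_of_lt_of_le hs1 hst
  have h := Real.log_le_sub_one_of_pos (show 0 < s / t₀ by positivity)
  have hlog : Real.log (s / t₀) = - Real.log (t₀ / s) := by
    rw [← Real.log_inv]; congr 1; field_simp
  rw [hlog] at h
  have : s / t₀ - 1 = -((t₀ - s) / t₀) := by field_simp; ring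
  rw [this] at h
  linarith

lemma k_le (hα0 : 0 < α) {s : ℝ} (hs1 : 1 ≤ s) (hst : s ≤ t₀) :
    (Real.log (t₀ / s)) ^ (-α) ≤ t₀ ^ α * (t₀ - s) ^ (-α) := by
  have ht₀ : (0:ℝ) < t₀ := lt_of_lt_of_le one_pos (le_trans hs1 hst)
  rcases eq_or_lt_of_le hst with rfl | hlt
  · simp only [div_self ht₀.ne', Real.log_one, sub_self]
    rw [Real.zero_rpow (by simpa using hα0.ne')]
    positivity
  · have h1 : (0:ℝ) < (t₀ - s) / t₀ := by
      apply div_pos <;> linarith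
    have h2 := log_lower (lt_of_lt_of_le one_pos hs1) hst
    have := Real.rpow_le_rpow_of_nonpos h1 h2 (by linarith : -α ≤ 0)
    calc (Real.log (t₀ / s)) ^ (-α) ≤ ((t₀ - s) / t₀) ^ (-α) := this
      _ = (t₀ - s) ^ (-α) / t₀ ^ (-α) := Real.div_rpow (by linarith) ht₀.le _
      _ = t₀ ^ α * (t₀ - s) ^ (-α) := by
          rw [Real.rpow_neg ht₀.le, div_inv_eq_mul, mul_comm]

lemma k_nonneg {s : ℝ} (hs1 : 1 ≤ s) (hst : s ≤ t₀) : 0 ≤ (Real.log (t₀ / s)) ^ (-α) := by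
  apply Real.rpow_nonneg
  apply Real.log_nonneg
  rw [le_div_iff₀ (by linarith)]
  linarith

lemma dom_intervalIntegrable (hα1 : α < 1) :
    IntervalIntegrable (fun s => t₀ ^ α * (t₀ - s) ^ (-α)) volume 1 t₀ := by
  have h : IntervalIntegrable (fun x : ℝ => x ^ (-α)) volume (t₀ - 1) (t₀ - t₀) :=
    intervalIntegral.intervalIntegrable_rpow' (by linarith)
  have h2 := h.comp_sub_left t₀
  simp only [sub_sub_cancel] at h2
  exact h2.const_mul _

lemma kmul_intervalIntegrable (hα0 : 0 < α) (hα1 : α < 1) (ht₀ : 1 < t₀)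
    {g : ℝ → ℝ} (hg : ContinuousOn g (Icc 1 t₀)) :
    IntervalIntegrable (fun s => (Real.log (t₀ / s)) ^ (-α) * g s) volume 1 t₀ := by
  obtain ⟨C, hC⟩ := isCompact_Icc.exists_bound_of_continuousOn hg
  simp only [Real.norm_eq_abs] at hC
  have hmeas : AEStronglyMeasurable (fun s => (Real.log (t₀ / s)) ^ (-α) * g s)
      (volume.restrict (Set.uIoc 1 t₀)) := by
    rw [uIoc_of_le ht₀.le, ← Measure.restrict_congr_set Ioo_ae_eq_Ioc]
    have hk : ContinuousOn (fun s => (Real.log (t₀ / s)) ^ (-α)) (Ioo 1 t₀) := by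
      apply ContinuousOn.rpow_const
      · apply Real.continuousOn_log.comp (continuousOn_const.div continuousOn_id ?_) ?_
        · intro x hx; exact (lt_trans one_pos hx.1).ne'
        · intro x hx
          simp only [mem_compl_iff, mem_singleton_iff]
          have : 1 < t₀ / x := (one_lt_div (lt_trans one_pos hx.1)).2 hx.2
          intro h
          simp only [Pi.div_apply, id_eq] at h
          rw [h] at this; norm_num at this
      · intro x hx
        left
        have : 1 < t₀ / x := (one_lt_div (lt_trans one_pos hx.1)).2 hx.2
        exact (Real.log_pos this).ne'
    exact (hk.mul (hg.mono Ioo_subset_Icc_self)).aestronglyMeasurable measurableSet_Ioo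
  apply ((dom_intervalIntegrable hα1).const_mul C).mono_fun hmeas
  rw [uIoc_of_le ht₀.le]
  filter_upwards [ae_restrict_mem measurableSet_Ioc] with s hs
  have hs1 : 1 ≤ s := hs.1.le
  have hst : s ≤ t₀ := hs.2
  have hC' := hC s ⟨hs1, hst⟩
  have hCnn : (0:ℝ) ≤ C := le_trans (abs_nonneg _) hC'
  have h1 : 0 ≤ (Real.log (t₀ / s)) ^ (-α) := k_nonneg hs1 hst
  have h2 := k_le hα0 hs1 hst
  have hdnn : 0 ≤ (t₀ - s) ^ (-α) := Real.rpow_nonneg (by linarith) _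
  simp only [norm_mul, Real.norm_eq_abs, abs_of_nonneg h1]
  calc (Real.log (t₀ / s)) ^ (-α) * |g s| ≤ (t₀ ^ α * (t₀ - s) ^ (-α)) * C := by
        apply mul_le_mul h2 hC' (abs_nonneg _) (by positivity)
    _ = C * (t₀ ^ α * (t₀ - s) ^ (-α)) := by ring
    _ ≤ |C * (t₀ ^ α * (t₀ - s) ^ (-α))| := le_abs_self _
    _ ≤ |C| * (|t₀ ^ α| * |(t₀ - s) ^ (-α)|) := by rw [abs_mul, abs_mul]

lemma k_hasDerivAt (hα0 : 0 < α) {s : ℝ} (hs1 : 1 ≤ s) (hst : s < t₀) :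
    HasDerivAt (fun y => (Real.log (t₀ / y)) ^ (-α))
      (s⁻¹ * α * (Real.log (t₀ / s)) ^ (-α - 1)) s := by
  have hs0 : 0 < s := lt_of_lt_of_le one_pos hs1
  have ht₀0 : (0:ℝ) < t₀ := lt_trans hs0 hst
  have hlogpos : 0 < Real.log (t₀ / s) := Real.log_pos ((one_lt_div hs0).2 hst)
  have hinner : HasDerivAt (fun y : ℝ => Real.log t₀ - Real.log y) (-s⁻¹) s := by
    simpa using (Real.hasDerivAt_log hs0.ne').const_sub (Real.log t₀)
  have h := hinner.rpow_const (p := -α) (Or.inl (by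
    rw [← Real.log_div ht₀0.ne' hs0.ne']
    exact hlogpos.ne'))
  have heq : (fun y : ℝ => (Real.log t₀ - Real.log y) ^ (-α)) =ᶠ[nhds s]
      (fun y => (Real.log (t₀ / y)) ^ (-α)) := by
    filter_upwards [eventually_gt_nhds hs0] with y hy
    rw [Real.log_div ht₀0.ne' hy.ne']
  have h2 := h.congr_of_eventuallyEq heq.symm
  refine h2.congr_deriv ?_
  rw [← Real.log_div ht₀0.ne' hs0.ne']
  ring

lemma k_continuousOn (hα0 : 0 < α) {r : ℝ} (hr : r < t₀) :
    ContinuousOn (fun s => (Real.log (t₀ / s)) ^ (-α)) (Icc 1 r) := by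
  intro s hs
  exact ((k_hasDerivAt hα0 hs.1 (lt_of_le_of_lt hs.2 hr)).continuousAt).continuousWithinAt

lemma kderiv_continuousOn (hα0 : 0 < α) {r : ℝ} (hr : r < t₀) :
    ContinuousOn (fun s => s⁻¹ * α * (Real.log (t₀ / s)) ^ (-α - 1)) (Icc 1 r) := by
  intro s hs
  have hs0 : (0:ℝ) < s := lt_of_lt_of_le one_pos hs.1
  have hst : s < t₀ := lt_of_le_of_lt hs.2 hr
  have ht₀0 : (0:ℝ) < t₀ := lt_trans hs0 hst
  have hlogpos : 0 < Real.log (t₀ / s) := Real.log_pos ((one_lt_div hs0).2 hst)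
  apply ContinuousAt.continuousWithinAt
  apply ContinuousAt.mul
  · exact (continuousAt_inv₀ hs0.ne').mul continuousAt_const
  · apply ContinuousAt.rpow_const
    · exact (Real.continuousAt_log (show t₀ / s ≠ 0 from ne_of_gt (by positivity))).comp
        (continuousAt_const.div continuousAt_id hs0.ne')
    · exact Or.inl hlogpos.ne'


variable {α t₀ T : ℝ} in
lemma caputo_integral_lower
    (hα0 : 0 < α) (hα1 : α < 1) (ht₀ : 1 < t₀) (hTt : t₀ ≤ T)
    {f : ℝ → ℝ} (hf : ContDiffOn ℝ 1 f (Set.Icc 1 T))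
    (hmax : ∀ s ∈ Icc 1 t₀, f s ≤ f t₀) :
    (Real.log t₀) ^ (-α) * (f t₀ - f 1) ≤
      ∫ s in (1:ℝ)..t₀, (Real.log (t₀ / s)) ^ (-α) * deriv f s := by
  set k : ℝ → ℝ := fun s => (Real.log (t₀ / s)) ^ (-α) with hkdef
  set c : ℝ := (Real.log t₀) ^ (-α) with hcdef
  set f' : ℝ → ℝ := derivWithin f (Icc 1 T) with hf'def
  have hT1 : (1:ℝ) < T := lt_of_lt_of_le ht₀ hTt
  have hsub : Icc (1:ℝ) t₀ ⊆ Icc 1 T := Icc_subset_Icc le_rfl hTt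
  have hf'c : ContinuousOn f' (Icc 1 t₀) :=
    (hf.continuousOn_derivWithin (uniqueDiffOn_Icc hT1) le_rfl).mono hsub
  have hder : ∀ s ∈ Ioo (1:ℝ) t₀, HasDerivAt f (f' s) s := by
    intro s hs
    have hmem : Icc (1:ℝ) T ∈ nhds s := Icc_mem_nhds hs.1 (lt_of_lt_of_le hs.2 hTt)
    have hd : DifferentiableAt ℝ f s :=
      ((hf.differentiableOn one_ne_zero) s (hsub (Ioo_subset_Icc_self hs))).differentiableAt hmem
    rw [hf'def, derivWithin_of_mem_nhds hmem]
    exact hd.hasDerivAt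
  have hfc : ContinuousOn f (Icc 1 t₀) := hf.continuousOn.mono hsub
  have huIcc : uIcc (1:ℝ) t₀ = Icc 1 t₀ := uIcc_of_le ht₀.le
  have hkf' : IntervalIntegrable (fun s => k s * f' s) volume 1 t₀ :=
    kmul_intervalIntegrable hα0 hα1 ht₀ hf'c
  have hf'int : IntervalIntegrable f' volume 1 t₀ :=
    (huIcc ▸ hf'c).intervalIntegrable
  have hcf'int : IntervalIntegrable (fun s => c * f' s) volume 1 t₀ := hf'int.const_mul c
  have hhf'int : IntervalIntegrable (fun s => (k s - c) * f' s) volume 1 t₀ := by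
    have h := hkf'.sub hcf'int
    simp only [← sub_mul] at h
    exact h
  have hftc : ∫ s in (1:ℝ)..t₀, f' s = f t₀ - f 1 :=
    integral_eq_sub_of_hasDeriv_right_of_le ht₀.le hfc
      (fun s hs => (hder s hs).hasDerivWithinAt) hf'int
  set Φ : ℝ → ℝ := fun r => ∫ s in (1:ℝ)..r, (k s - c) * f' s with hΦdef
  have hΦcont : ContinuousOn Φ (Icc 1 t₀) := by
    have hio : IntegrableOn (fun s => (k s - c) * f' s) (uIcc 1 t₀) volume := by
      rw [huIcc, integrableOn_Icc_iff_integrableOn_Ioc]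
      exact (intervalIntegrable_iff_integrableOn_Ioc_of_le ht₀.le).1 hhf'int
    exact huIcc ▸ continuousOn_primitive_interval hio
  obtain ⟨C, hC⟩ := isCompact_Icc.exists_bound_of_continuousOn hf'c
  simp only [Real.norm_eq_abs] at hC
  have hC0 : (0:ℝ) ≤ C := le_trans (abs_nonneg _) (hC 1 ⟨le_rfl, ht₀.le⟩)
  have hlip : ∀ r ∈ Icc (1:ℝ) t₀, |f t₀ - f r| ≤ C * (t₀ - r) := by
    intro r hr
    have hHD : ∀ x ∈ Icc (1:ℝ) t₀, HasDerivWithinAt f (f' x) (Icc 1 t₀) x := fun x hx =>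
      (((hf.differentiableOn one_ne_zero) x (hsub hx)).hasDerivWithinAt).mono hsub
    have := Convex.norm_image_sub_le_of_norm_hasDerivWithin_le hHD
      (fun x hx => by simpa using hC x hx) (convex_Icc 1 t₀) hr (right_mem_Icc.2 ht₀.le)
    simpa [Real.norm_eq_abs, abs_of_nonneg (sub_nonneg.2 hr.2)] using this
  have hcnn : 0 ≤ c := Real.rpow_nonneg (Real.log_nonneg ht₀.le) _
  have hkey : ∀ r ∈ Ioo (1:ℝ) t₀, -(C * t₀ ^ α * (t₀ - r) ^ (1 - α)) ≤ Φ r := by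
    intro r hr
    obtain ⟨hr1, hrt⟩ := hr
    have hIccr : Icc (1:ℝ) r ⊆ Icc 1 t₀ := Icc_subset_Icc le_rfl hrt.le
    have huIccr : uIcc (1:ℝ) r = Icc 1 r := uIcc_of_le hr1.le
    set v : ℝ → ℝ := fun s => f s - f t₀ with hvdef
    set P : ℝ → ℝ := fun s => (k s - c) * v s with hPdef
    set D : ℝ → ℝ := fun s =>
      (s⁻¹ * α * (Real.log (t₀ / s)) ^ (-α - 1)) * v s + (k s - c) * f' s with hDdef
    have hPderiv : ∀ s ∈ Ioo (1:ℝ) r, HasDerivWithinAt P (D s) (Ioi s) s := by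
      intro s hs
      have h1 : HasDerivAt (fun y => k y - c)
          (s⁻¹ * α * (Real.log (t₀ / s)) ^ (-α - 1)) s :=
        (k_hasDerivAt hα0 hs.1.le (lt_trans hs.2 hrt)).sub_const c
      have h2 : HasDerivAt v (f' s) s :=
        (hder s ⟨hs.1, lt_trans hs.2 hrt⟩).sub_const (f t₀)
      exact (h1.mul h2).hasDerivWithinAt
    have hPcont : ContinuousOn P (Icc 1 r) :=
      ((k_continuousOn hα0 hrt).sub continuousOn_const).mul
        ((hfc.mono hIccr).sub continuousOn_const)
    have hh'cont : ContinuousOn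
        (fun s => (s⁻¹ * α * (Real.log (t₀ / s)) ^ (-α - 1)) * v s) (Icc 1 r) :=
      (kderiv_continuousOn hα0 hrt).mul ((hfc.mono hIccr).sub continuousOn_const)
    have hkcf'cont : ContinuousOn (fun s => (k s - c) * f' s) (Icc 1 r) :=
      ((k_continuousOn hα0 hrt).sub continuousOn_const).mul (hf'c.mono hIccr)
    have hDcont : ContinuousOn D (Icc 1 r) := hh'cont.add hkcf'cont
    have hDint : IntervalIntegrable D volume 1 r := (huIccr ▸ hDcont).intervalIntegrable
    have hh'int : IntervalIntegrable
        (fun s => (s⁻¹ * α * (Real.log (t₀ / s)) ^ (-α - 1)) * v s) volume 1 r :=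
      (huIccr ▸ hh'cont).intervalIntegrable
    have hftcP : ∫ s in (1:ℝ)..r, D s = P r - P 1 :=
      integral_eq_sub_of_hasDeriv_right_of_le hr1.le hPcont hPderiv hDint
    have hP1 : P 1 = 0 := by
      simp [hPdef, hkdef, hcdef]
    have hsplit : Φ r = (∫ s in (1:ℝ)..r, D s)
        - ∫ s in (1:ℝ)..r, (s⁻¹ * α * (Real.log (t₀ / s)) ^ (-α - 1)) * v s := by
      rw [← integral_sub hDint hh'int]
      apply integral_congr
      intro s _
      simp only [hDdef]
      ring
    have hIvle : ∫ s in (1:ℝ)..r, (s⁻¹ * α * (Real.log (t₀ / s)) ^ (-α - 1)) * v s ≤ 0 := by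
      rw [← neg_nonneg, ← intervalIntegral.integral_neg]
      apply integral_nonneg hr1.le
      intro s hs
      have hs0 : (0:ℝ) < s := lt_of_lt_of_le one_pos hs.1
      have hvle : v s ≤ 0 := sub_nonpos.2 (hmax s (hIccr hs))
      have hh'nn : 0 ≤ s⁻¹ * α * (Real.log (t₀ / s)) ^ (-α - 1) := by
        apply mul_nonneg (mul_nonneg (by positivity) hα0.le)
        exact Real.rpow_nonneg (Real.log_nonneg (by
          rw [le_div_iff₀ hs0]; simpa using (hIccr hs).2)) _
      simpa using mul_nonneg hh'nn (neg_nonneg.2 hvle)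
    have hPr : -(C * t₀ ^ α * (t₀ - r) ^ (1 - α)) ≤ P r := by
      have hkrc : 0 ≤ k r - c := by
        rw [sub_nonneg, hkdef, hcdef]
        have hlog1 : 0 < Real.log (t₀ / r) :=
          Real.log_pos ((one_lt_div (lt_trans one_pos hr1)).2 hrt)
        have hlog2 : Real.log (t₀ / r) ≤ Real.log t₀ :=
          Real.log_le_log (by positivity)
            (div_le_self (by linarith) hr1.le)
        exact Real.rpow_le_rpow_of_nonpos hlog1 hlog2 (by linarith)
      have hvr : |v r| ≤ C * (t₀ - r) := by
        rw [hvdef, abs_sub_comm]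
        exact hlip r ⟨hr1.le, hrt.le⟩
      have hkle : k r ≤ t₀ ^ α * (t₀ - r) ^ (-α) := k_le hα0 hr1.le hrt.le
      have hrpow : (t₀ - r) ^ ((1:ℝ) - α) = (t₀ - r) ^ (-α) * (t₀ - r) := by
        rw [show (1:ℝ) - α = -α + 1 by ring, Real.rpow_add (by linarith : (0:ℝ) < t₀ - r),
          Real.rpow_one]
      have h1 : -((k r - c) * |v r|) ≤ P r := by
        rw [hPdef]
        have := neg_abs_le ((k r - c) * v r)
        rwa [abs_mul, abs_of_nonneg hkrc] at this
      have h2 : (k r - c) * |v r| ≤ C * t₀ ^ α * (t₀ - r) ^ (1 - α) := by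
        rw [hrpow]
        have hkr : k r - c ≤ t₀ ^ α * (t₀ - r) ^ (-α) := by linarith
        calc (k r - c) * |v r| ≤ (t₀ ^ α * (t₀ - r) ^ (-α)) * (C * (t₀ - r)) :=
              mul_le_mul hkr hvr (abs_nonneg _) (by
                have : (0:ℝ) ≤ (t₀ - r) ^ (-α) := Real.rpow_nonneg (by linarith) _
                positivity)
          _ = C * t₀ ^ α * ((t₀ - r) ^ (-α) * (t₀ - r)) := by ring
      linarith [hsplit, hftcP, hP1, hIvle]
    linarith [hsplit, hftcP, hP1, hIvle, hPr]
  -- limit argument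
  haveI hNB : (nhdsWithin t₀ (Ioo (1:ℝ) t₀)).NeBot := by
    apply mem_closure_iff_nhdsWithin_neBot.1
    rw [closure_Ioo (by linarith : (1:ℝ) ≠ t₀)]
    exact right_mem_Icc.2 ht₀.le
  have hlimΦ : Tendsto Φ (nhdsWithin t₀ (Ioo (1:ℝ) t₀)) (nhds (Φ t₀)) :=
    (hΦcont t₀ (right_mem_Icc.2 ht₀.le)).mono Ioo_subset_Icc_self
  have hlimg : Tendsto (fun r => -(C * t₀ ^ α * (t₀ - r) ^ ((1:ℝ) - α)))
      (nhdsWithin t₀ (Ioo (1:ℝ) t₀)) (nhds 0) := by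
    have h1 : Tendsto (fun r : ℝ => t₀ - r) (nhds t₀) (nhds 0) := by
      have h0 : Tendsto (fun r : ℝ => r) (nhds t₀) (nhds t₀) := tendsto_id
      have := (tendsto_const_nhds (x := t₀) (f := nhds t₀)).sub h0
      simpa using this
    have h2 : ContinuousAt (fun x : ℝ => x ^ ((1:ℝ) - α)) 0 :=
      Real.continuousAt_rpow_const 0 _ (Or.inr (by linarith))
    have h3 : Tendsto (fun r : ℝ => (t₀ - r) ^ ((1:ℝ) - α)) (nhds t₀) (nhds 0) := by
      have := h2.tendsto.comp h1
      simpa [Function.comp_def, Real.zero_rpow (by linarith : (1:ℝ) - α ≠ 0)] using this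
    have h4 : Tendsto (fun r : ℝ => -(C * t₀ ^ α * (t₀ - r) ^ ((1:ℝ) - α)))
        (nhds t₀) (nhds 0) := by
      have := (h3.const_mul (C * t₀ ^ α)).neg
      simpa [mul_assoc] using this
    exact h4.mono_left nhdsWithin_le_nhds
  have h0le : 0 ≤ Φ t₀ :=
    le_of_tendsto_of_tendsto hlimg hlimΦ
      (eventually_mem_nhdsWithin.mono fun r hr => hkey r hr)
  have hΦt₀ : Φ t₀ = (∫ s in (1:ℝ)..t₀, k s * f' s) - c * (f t₀ - f 1) := by
    have heq : (fun s => (k s - c) * f' s) = fun s => k s * f' s - c * f' s := by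
      funext s; ring
    rw [hΦdef]
    simp only [heq]
    rw [integral_sub hkf' hcf'int, intervalIntegral.integral_const_mul, hftc]
  have hcongr : ∫ s in (1:ℝ)..t₀, k s * deriv f s = ∫ s in (1:ℝ)..t₀, k s * f' s := by
    apply intervalIntegral.integral_congr_ae
    have hne : ∀ᵐ x : ℝ, x ≠ t₀ := by
      have hset : {x : ℝ | ¬ x ≠ t₀} = {t₀} := by ext x; simp
      rw [ae_iff, hset]
      exact measure_singleton t₀
    filter_upwards [hne] with s hsne hs
    rw [uIoc_of_le ht₀.le] at hs
    have hs' : s ∈ Ioo (1:ℝ) t₀ := ⟨hs.1, lt_of_le_of_ne hs.2 hsne⟩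
    rw [(hder s hs').deriv]
  rw [hcongr]
  linarith [h0le, hΦt₀]

variable {α t₀ T : ℝ} in
lemma kderiv_intervalIntegrable (hα0 : 0 < α) (hα1 : α < 1) (ht₀ : 1 < t₀) (hTt : t₀ ≤ T)
    {f : ℝ → ℝ} (hf : ContDiffOn ℝ 1 f (Set.Icc 1 T)) :
    IntervalIntegrable (fun s => (Real.log (t₀ / s)) ^ (-α) * deriv f s) volume 1 t₀ := by
  have hT1 : (1:ℝ) < T := lt_of_lt_of_le ht₀ hTt
  have hsub : Icc (1:ℝ) t₀ ⊆ Icc 1 T := Icc_subset_Icc le_rfl hTt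
  set f' : ℝ → ℝ := derivWithin f (Icc 1 T) with hf'def
  have hf'c : ContinuousOn f' (Icc 1 t₀) :=
    (hf.continuousOn_derivWithin (uniqueDiffOn_Icc hT1) le_rfl).mono hsub
  apply (kmul_intervalIntegrable hα0 hα1 ht₀ hf'c).congr_ae
  rw [uIoc_of_le ht₀.le]
  have hne : ∀ᵐ x : ℝ, x ≠ t₀ := by
    have hset : {x : ℝ | ¬ x ≠ t₀} = {t₀} := by ext x; simp
    rw [ae_iff, hset]
    exact measure_singleton t₀
  filter_upwards [ae_restrict_of_ae hne, ae_restrict_mem measurableSet_Ioc] with s hsne hs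
  have hs' : s ∈ Ioo (1:ℝ) t₀ := ⟨hs.1, lt_of_le_of_ne hs.2 hsne⟩
  have hmem : Icc (1:ℝ) T ∈ nhds s := Icc_mem_nhds hs'.1 (lt_of_lt_of_le hs'.2 hTt)
  rw [hf'def, derivWithin_of_mem_nhds hmem]

end CHaux

lemma secondDeriv_nonpos_of_isLocalMax {f : ℝ → ℝ} {a : ℝ} {s : Set ℝ}
    (hs : IsOpen s) (ha : a ∈ s) (hf : ContDiffOn ℝ 2 f s) (hmax : IsLocalMax f a) :
    iteratedDeriv 2 f a ≤ 0 := by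
  by_contra hpos
  push_neg at hpos
  set g := deriv f with hg
  have hgC1 : ContDiffOn ℝ 1 g s := hf.deriv_of_isOpen hs (by norm_num)
  have hgderiv_cont : ContinuousOn (deriv g) s :=
    hgC1.continuousOn_deriv_of_isOpen hs le_rfl
  have hit : iteratedDeriv 2 f a = deriv g a := by
    rw [iteratedDeriv_succ, iteratedDeriv_one]
  rw [hit] at hpos
  have h1 : ∀ᶠ x in nhds a, x ∈ s := hs.mem_nhds ha
  have h2 : ∀ᶠ x in nhds a, 0 < deriv g x :=
    continuousAt_const.eventually_lt (hgderiv_cont.continuousAt (hs.mem_nhds ha)) hpos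
  have h3 : ∀ᶠ x in nhds a, f x ≤ f a := hmax
  obtain ⟨ε, hε, hball⟩ := Metric.mem_nhds_iff.1 ((h1.and (h2.and h3)).mono fun x hx => hx :
    {x | x ∈ s ∧ 0 < deriv g x ∧ f x ≤ f a} ∈ nhds a)
  have hballsub : Metric.ball a ε ⊆ s := fun x hx => (hball hx).1
  -- g is strictly monotone on the ball
  have hgmono : StrictMonoOn g (Metric.ball a ε) := by
    apply strictMonoOn_of_deriv_pos (convex_ball a ε)
    · exact (hgC1.continuousOn).mono hballsub
    · intro x hx
      rw [Metric.isOpen_ball.interior_eq] at hx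
      exact (hball hx).2.1
  have hga : g a = 0 := hmax.deriv_eq_zero
  -- f is strictly monotone on [a, a + ε/2]
  have hsubIcc : Icc a (a + ε/2) ⊆ Metric.ball a ε := by
    intro x hx
    rw [Metric.mem_ball, Real.dist_eq, abs_of_nonneg (by linarith [hx.1])]
    linarith [hx.2]
  have hfmono : StrictMonoOn f (Icc a (a + ε/2)) := by
    apply strictMonoOn_of_deriv_pos (convex_Icc _ _)
    · exact hf.continuousOn.mono (hsubIcc.trans hballsub)
    · intro x hx
      rw [interior_Icc] at hx
      have hxball : x ∈ Metric.ball a ε := hsubIcc (Ioo_subset_Icc_self hx)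
      have : g a < g x := hgmono (Metric.mem_ball_self hε) hxball hx.1
      rw [hga] at this
      exact this
  have hlt : f a < f (a + ε/2) :=
    hfmono (left_mem_Icc.2 (by linarith)) (right_mem_Icc.2 (by linarith)) (by linarith)
  have hle : f (a + ε/2) ≤ f a := (hball (hsubIcc (right_mem_Icc.2 (by linarith)))).2.2
  linarith

lemma iteratedDeriv_two_sub {f g : ℝ → ℝ} {a : ℝ} {s : Set ℝ}
    (hs : IsOpen s) (ha : a ∈ s) (hf : ContDiffOn ℝ 2 f s) (hg : ContDiffOn ℝ 2 g s) :
    iteratedDeriv 2 (fun z => f z - g z) a = iteratedDeriv 2 f a - iteratedDeriv 2 g a := by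
  have hdf : ∀ x ∈ s, DifferentiableAt ℝ f x := fun x hx =>
    ((hf.differentiableOn (by norm_num)) x hx).differentiableAt (hs.mem_nhds hx)
  have hdg : ∀ x ∈ s, DifferentiableAt ℝ g x := fun x hx =>
    ((hg.differentiableOn (by norm_num)) x hx).differentiableAt (hs.mem_nhds hx)
  have hstep1 : (fun z => deriv (fun y => f y - g y) z) =ᶠ[nhds a]
      (fun z => deriv f z - deriv g z) := by
    filter_upwards [hs.mem_nhds ha] with z hz
    exact deriv_sub (hdf z hz) (hdg z hz)
  have hdf' : DifferentiableAt ℝ (deriv f) a :=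
    (((hf.deriv_of_isOpen hs (m := 1) (by norm_num)).differentiableOn one_ne_zero) a ha).differentiableAt
      (hs.mem_nhds ha)
  have hdg' : DifferentiableAt ℝ (deriv g) a :=
    (((hg.deriv_of_isOpen hs (m := 1) (by norm_num)).differentiableOn one_ne_zero) a ha).differentiableAt
      (hs.mem_nhds ha)
  rw [iteratedDeriv_succ, iteratedDeriv_one, iteratedDeriv_succ, iteratedDeriv_one,
    iteratedDeriv_succ, iteratedDeriv_one]
  rw [hstep1.deriv_eq]
  exact deriv_sub hdf' hdg'

lemma continuous_update_line {n : ℕ} (x : Fin n → ℝ) (j : Fin n) :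
    Continuous (fun z : ℝ => Function.update x j z) := by
  apply continuous_pi
  intro i
  rcases eq_or_ne i j with rfl | hij
  · simp only [Function.update_self]; exact (continuous_id : Continuous fun z : ℝ => z)
  · simpa [Function.update_of_ne hij] using (continuous_const : Continuous fun _ : ℝ => x i)

end CHproofAux

lemma one_side
    {n : ℕ} (G : Set (Fin n → ℝ)) (hGopen : IsOpen G) (hGne : G.Nonempty)
    (hGbdd : Bornology.IsBounded G)
    (T ν α : ℝ) (hT : 1 < T) (hν : 0 < ν) (hα0 : 0 < α) (hα1 : α < 1)
    (F : (Fin n → ℝ) → ℝ → ℝ → ℝ)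
    (hFmono : ∀ x t, ∀ v w : ℝ, v ≤ w → F x t w ≤ F x t v)
    (g₁ g₂ : (Fin n → ℝ) → ℝ) (ψ : (Fin n → ℝ) → ℝ → ℝ)
    (u₁ u₂ : (Fin n → ℝ) → ℝ → ℝ)
    (h₁ : IsSolutionNonlinearCH G T ν α u₁ F g₁ ψ)
    (h₂ : IsSolutionNonlinearCH G T ν α u₂ F g₂ ψ) :
    ∀ x ∈ closure G, ∀ t ∈ Set.Icc (1:ℝ) T,
      u₁ x t - u₂ x t ≤ sSup ((fun x' => |g₁ x' - g₂ x'|) '' closure G) := by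
  set S := (fun x' => |g₁ x' - g₂ x'|) '' closure G with hSdef
  set M := sSup S with hMdef
  set K := closure G ×ˢ Set.Icc (1:ℝ) T with hKdef
  have hGc : IsCompact (closure G) :=
    Metric.isCompact_of_isClosed_isBounded isClosed_closure hGbdd.closure
  have hKc : IsCompact K := hGc.prod isCompact_Icc
  obtain ⟨xb, hxb⟩ := hGne
  have hxbcl : xb ∈ closure G := subset_closure hxb
  have hKne : K.Nonempty := ⟨(xb, 1), hxbcl, le_rfl, hT.le⟩
  set w : (Fin n → ℝ) × ℝ → ℝ := fun p => u₁ p.1 p.2 - u₂ p.1 p.2 with hwdef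
  have hwcont : ContinuousOn w K := h₁.1.sub h₂.1
  obtain ⟨p₀, hp₀K, hp₀max⟩ := hKc.exists_isMaxOn hKne hwcont
  -- facts about M
  have hgcont : ContinuousOn (fun x => |g₁ x - g₂ x|) (closure G) := by
    have hmap : MapsTo (fun x : Fin n → ℝ => (x, (1:ℝ))) (closure G) K := fun x hx =>
      ⟨hx, le_rfl, hT.le⟩
    have h0 : ContinuousOn (fun x : Fin n → ℝ => w (x, 1)) (closure G) :=
      hwcont.comp (continuousOn_id.prodMk continuousOn_const) hmap
    have heq : EqOn (fun x : Fin n → ℝ => w (x, 1)) (fun x => g₁ x - g₂ x) (closure G) := by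
      intro x hx
      simp only [hwdef]
      rw [h₁.2.2.2.2.1 x hx, h₂.2.2.2.2.1 x hx]
    exact ((h0.congr heq.symm)).abs
  have hbdd : BddAbove S := (hGc.image_of_continuousOn hgcont).bddAbove
  have hM0 : ∀ x ∈ closure G, g₁ x - g₂ x ≤ M := fun x hx =>
    le_trans (le_abs_self _) (le_csSup hbdd ⟨x, hx, rfl⟩)
  have hMnn : 0 ≤ M := le_trans (abs_nonneg _) (le_csSup hbdd ⟨xb, hxbcl, rfl⟩)
  suffices hclaim : w p₀ ≤ M by
    intro x hx t ht
    exact le_trans (hp₀max (⟨hx, ht⟩ : (x, t) ∈ K)) hclaim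
  by_contra hgt
  push_neg at hgt
  obtain ⟨x₀, t₀⟩ := p₀
  have hx₀cl : x₀ ∈ closure G := hp₀K.1
  have ht₀mem : t₀ ∈ Set.Icc (1:ℝ) T := hp₀K.2
  have hwp₀ : w (x₀, t₀) = u₁ x₀ t₀ - u₂ x₀ t₀ := rfl
  have ht₀ne : t₀ ≠ 1 := by
    intro h
    rw [h] at hgt
    have : w (x₀, 1) = g₁ x₀ - g₂ x₀ := by
      simp only [hwdef]
      rw [h₁.2.2.2.2.1 x₀ hx₀cl, h₂.2.2.2.2.1 x₀ hx₀cl]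
    rw [this] at hgt
    exact absurd (hM0 x₀ hx₀cl) (not_le.2 hgt)
  have ht₀Ioc : t₀ ∈ Set.Ioc (1:ℝ) T := ⟨lt_of_le_of_ne ht₀mem.1 (Ne.symm ht₀ne), ht₀mem.2⟩
  have hx₀G : x₀ ∈ G := by
    by_contra hxG
    have hfr : x₀ ∈ frontier G := by
      rw [hGopen.frontier_eq]; exact ⟨hx₀cl, hxG⟩
    have hb1 := h₁.2.2.2.2.2 x₀ hfr t₀ ht₀mem
    have hb2 := h₂.2.2.2.2.2 x₀ hfr t₀ ht₀mem
    have : w (x₀, t₀) = 0 := by simp only [hwdef]; rw [hb1, hb2]; ring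
    rw [this] at hgt
    linarith
  -- PDE at the max point
  have hpde₁ := h₁.2.2.2.1 x₀ hx₀G t₀ ht₀Ioc
  have hpde₂ := h₂.2.2.2.1 x₀ hx₀G t₀ ht₀Ioc
  -- time part
  set f : ℝ → ℝ := fun s => u₁ x₀ s - u₂ x₀ s with hfdef
  have hfC : ContDiffOn ℝ 1 f (Set.Icc 1 T) := (h₁.2.1 x₀ hx₀G).sub (h₂.2.1 x₀ hx₀G)
  have hmaxf : ∀ s ∈ Set.Icc (1:ℝ) t₀, f s ≤ f t₀ := by
    intro s hs
    exact hp₀max (⟨hx₀cl, hs.1, le_trans hs.2 ht₀mem.2⟩ : (x₀, s) ∈ K)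
  have hL2 := CHaux.caputo_integral_lower hα0 hα1 ht₀Ioc.1 ht₀mem.2 hfC hmaxf
  have hf1 : f 1 = g₁ x₀ - g₂ x₀ := by
    simp only [hfdef]
    rw [h₁.2.2.2.2.1 x₀ hx₀cl, h₂.2.2.2.2.1 x₀ hx₀cl]
  have hflt : f 1 < f t₀ := by
    rw [hf1]
    exact lt_of_le_of_lt (hM0 x₀ hx₀cl) hgt
  have hcpos : (0:ℝ) < (Real.log t₀) ^ (-α) :=
    Real.rpow_pos_of_pos (Real.log_pos ht₀Ioc.1) _
  have hIpos : 0 < ∫ s in (1:ℝ)..t₀, (Real.log (t₀ / s)) ^ (-α) * deriv f s :=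
    lt_of_lt_of_le (mul_pos hcpos (sub_pos.2 hflt)) hL2
  have hint₁ : IntervalIntegrable
      (fun s => (Real.log (t₀ / s)) ^ (-α) * deriv (u₁ x₀) s) volume 1 t₀ :=
    CHaux.kderiv_intervalIntegrable hα0 hα1 ht₀Ioc.1 ht₀mem.2 (h₁.2.1 x₀ hx₀G)
  have hint₂ : IntervalIntegrable
      (fun s => (Real.log (t₀ / s)) ^ (-α) * deriv (u₂ x₀) s) volume 1 t₀ :=
    CHaux.kderiv_intervalIntegrable hα0 hα1 ht₀Ioc.1 ht₀mem.2 (h₂.2.1 x₀ hx₀G)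
  have hcap : caputoHadamardT α u₁ x₀ t₀ - caputoHadamardT α u₂ x₀ t₀
      = (1 / Real.Gamma (1 - α)) *
        ∫ s in (1:ℝ)..t₀, (Real.log (t₀ / s)) ^ (-α) * deriv f s := by
    unfold caputoHadamardT
    rw [← mul_sub, ← intervalIntegral.integral_sub hint₁ hint₂]
    congr 1
    apply intervalIntegral.integral_congr_ae
    have hne : ∀ᵐ x : ℝ, x ≠ t₀ := by
      have hset : {x : ℝ | ¬ x ≠ t₀} = {t₀} := by ext x; simp
      rw [ae_iff, hset]
      exact measure_singleton t₀
    filter_upwards [hne] with s hsne hs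
    rw [Set.uIoc_of_le ht₀Ioc.1.le] at hs
    have hs' : s ∈ Set.Ioo (1:ℝ) t₀ := ⟨hs.1, lt_of_le_of_ne hs.2 hsne⟩
    have hmem : Set.Icc (1:ℝ) T ∈ nhds s :=
      Icc_mem_nhds hs'.1 (lt_of_lt_of_le hs'.2 ht₀mem.2)
    have hd₁ : DifferentiableAt ℝ (u₁ x₀) s :=
      (((h₁.2.1 x₀ hx₀G).differentiableOn one_ne_zero) s
        ⟨hs'.1.le, le_trans hs'.2.le ht₀mem.2⟩).differentiableAt hmem
    have hd₂ : DifferentiableAt ℝ (u₂ x₀) s :=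
      (((h₂.2.1 x₀ hx₀G).differentiableOn one_ne_zero) s
        ⟨hs'.1.le, le_trans hs'.2.le ht₀mem.2⟩).differentiableAt hmem
    have : deriv f s = deriv (u₁ x₀) s - deriv (u₂ x₀) s := deriv_sub hd₁ hd₂
    rw [this]
    ring
  have hΓ : 0 < Real.Gamma (1 - α) := Real.Gamma_pos_of_pos (by linarith)
  have hcappos : 0 < caputoHadamardT α u₁ x₀ t₀ - caputoHadamardT α u₂ x₀ t₀ := by
    rw [hcap]
    exact mul_pos (by positivity) hIpos
  -- spatial part
  have hlap : laplacianX u₁ x₀ t₀ - laplacianX u₂ x₀ t₀ ≤ 0 := by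
    unfold laplacianX
    rw [← Finset.sum_sub_distrib]
    apply Finset.sum_nonpos
    intro j _
    set O : Set ℝ := (fun z : ℝ => Function.update x₀ j z) ⁻¹' G with hOdef
    have hO : IsOpen O := hGopen.preimage (continuous_update_line x₀ j)
    have haO : x₀ j ∈ O := by
      simp only [hOdef, Set.mem_preimage, Function.update_eq_self]
      exact hx₀G
    have hline : ContDiff ℝ 2 (fun z : ℝ => Function.update x₀ j z) := by
      apply contDiff_pi.2
      intro i
      rcases eq_or_ne i j with rfl | hij
      · simp only [Function.update_self]; exact (contDiff_id : ContDiff ℝ 2 fun z : ℝ => z)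
      · simpa [Function.update_of_ne hij] using
          (contDiff_const : ContDiff ℝ 2 fun _ : ℝ => x₀ i)
    have hq₁ : ContDiffOn ℝ 2 (fun z => u₁ (Function.update x₀ j z) t₀) O :=
      (h₁.2.2.1 t₀ ht₀Ioc).comp hline.contDiffOn (fun z hz => hz)
    have hq₂ : ContDiffOn ℝ 2 (fun z => u₂ (Function.update x₀ j z) t₀) O :=
      (h₂.2.2.1 t₀ ht₀Ioc).comp hline.contDiffOn (fun z hz => hz)
    have hmaxq : IsLocalMax
        (fun z => u₁ (Function.update x₀ j z) t₀ - u₂ (Function.update x₀ j z) t₀) (x₀ j) := by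
      filter_upwards [hO.mem_nhds haO] with z hz
      have hK : (Function.update x₀ j z, t₀) ∈ K := ⟨subset_closure hz, ht₀mem⟩
      have := hp₀max hK
      simpa [hwdef, Function.update_eq_self] using this
    have h2d := secondDeriv_nonpos_of_isLocalMax hO haO (hq₁.sub hq₂) hmaxq
    rwa [iteratedDeriv_two_sub hO haO hq₁ hq₂] at h2d
  -- nonlinearity part
  have hu21 : u₂ x₀ t₀ ≤ u₁ x₀ t₀ := by
    rw [hwp₀] at hgt
    linarith
  have hFle : F x₀ t₀ (u₁ x₀ t₀) ≤ F x₀ t₀ (u₂ x₀ t₀) := hFmono x₀ t₀ _ _ hu21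
  have hνlap : ν * (laplacianX u₁ x₀ t₀ - laplacianX u₂ x₀ t₀) ≤ 0 :=
    mul_nonpos_of_nonneg_of_nonpos hν.le hlap
  have hfinal : caputoHadamardT α u₁ x₀ t₀ - caputoHadamardT α u₂ x₀ t₀ =
      ν * (laplacianX u₁ x₀ t₀ - laplacianX u₂ x₀ t₀) +
        (F x₀ t₀ (u₁ x₀ t₀) - F x₀ t₀ (u₂ x₀ t₀)) := by
    rw [hpde₁, hpde₂]; ring
  linarith


theorem stability_nonlinear_caputoHadamard_diffusion
    {n : ℕ} (G : Set (Fin n → ℝ)) (hGopen : IsOpen G) (hGne : G.Nonempty)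
    (hGbdd : Bornology.IsBounded G)
    (T ν α : ℝ) (hT : 1 < T) (hν : 0 < ν) (hα0 : 0 < α) (hα1 : α < 1)
    (F : (Fin n → ℝ) → ℝ → ℝ → ℝ)
    (hFc : Continuous fun p : (Fin n → ℝ) × ℝ × ℝ => F p.1 p.2.1 p.2.2)
    (hFsmooth : ∀ x t, ContDiff ℝ 1 (F x t))
    (hFmono : ∀ x t, ∀ v w : ℝ, v ≤ w → F x t w ≤ F x t v)
    (g₁ g₂ : (Fin n → ℝ) → ℝ) (ψ : (Fin n → ℝ) → ℝ → ℝ)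
    (u₁ u₂ : (Fin n → ℝ) → ℝ → ℝ)
    (h₁ : IsSolutionNonlinearCH G T ν α u₁ F g₁ ψ)
    (h₂ : IsSolutionNonlinearCH G T ν α u₂ F g₂ ψ) :
    ∀ x ∈ closure G, ∀ t ∈ Set.Icc (1:ℝ) T,
      |u₁ x t - u₂ x t| ≤ sSup ((fun x' => |g₁ x' - g₂ x'|) '' closure G) := by
  intro x hx t ht
  have hA := one_side G hGopen hGne hGbdd T ν α hT hν hα0 hα1 F hFmono g₁ g₂ ψ u₁ u₂ h₁ h₂
    x hx t ht
  have hB := one_side G hGopen hGne hGbdd T ν α hT hν hα0 hα1 F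
    (fun x t v w hvw => hFmono x t v w hvw) g₂ g₁ ψ u₂ u₁ h₂ h₁ x hx t ht
  have hEq : (fun x' => |g₂ x' - g₁ x'|) = (fun x' => |g₁ x' - g₂ x'|) := by
    funext x'
    exact abs_sub_comm _ _
  rw [hEq] at hB
  rw [abs_sub_le_iff]
  exact ⟨hA, hB⟩
end
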